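/- arXiv:2012.08718 — 10 statements merged into one kernel-verified Lean document; each statement's English description precedes it below -/
import Mathlib

section
/- Monotone expansion of the passive set (Theorem 1, definition of indexability): for all integers τ ≥ 1, b ≥ 0 and all reals δ₁ ≤ δ₂, if the passive action is optimal at state (τ,b) under subsidy δ₁ (i.e. g_{δ₁}(τ,b) ≥ 0) then it is also optimal under subsidy δ₂ (i.e. g_{δ₂}(τ,b) ≥ 0). -/
noncomputable def F (α : ℝ) (x : ℕ) : ℝ := α * (x : ℝ) ^ 2

noncomputable def V (k : ℕ) (E α β δ : ℝ) : ℕ → ℕ → ℝ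
  | 0, _ => 0
  | 1, 0 => max δ 0
  | 1, b + 1 => max (δ - F α b) (E - F α (b + 1 - k))
  | t + 2, b =>
      max (δ + β * V k E α β δ (t + 1) (b - 1))
        ((if 1 ≤ b then E else 0) + β * V k E α β δ (t + 1) (b - k))

noncomputable def g (k : ℕ) (E α β δ : ℝ) : ℕ → ℕ → ℝ
  | 0, _ => 0
  | 1, 0 => δ
  | 1, b + 1 => δ - F α b - E + F α (b + 1 - k)
  | t + 2, b =>
      δ + β * V k E α β δ (t + 1) (b - 1) - (if 1 ≤ b then E else 0)
        - β * V k E α β δ (t + 1) (b - k)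

noncomputable def whittle (k : ℕ) (E α β : ℝ) (τ b : ℕ) : ℝ :=
  sInf {δ : ℝ | 0 ≤ g k E α β δ τ b}

lemma V_two (k : ℕ) (E α β δ : ℝ) (t b : ℕ) :
    V k E α β δ (t + 2) b =
      max (δ + β * V k E α β δ (t + 1) (b - 1))
        ((if 1 ≤ b then E else 0) + β * V k E α β δ (t + 1) (b - k)) := by
  rfl

lemma max_sub_le (p₁ p₂ a₁ a₂ : ℝ) :
    max p₂ a₂ - max p₁ a₁ ≤ max (p₂ - p₁) (a₂ - a₁) := by
  have hp := le_max_left (p₂ - p₁) (a₂ - a₁)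
  have ha := le_max_right (p₂ - p₁) (a₂ - a₁)
  have hp1 := le_max_left p₁ a₁
  have ha1 := le_max_right p₁ a₁
  have : max p₂ a₂ ≤ max (p₂ - p₁) (a₂ - a₁) + max p₁ a₁ :=
    max_le (by linarith) (by linarith)
  linarith

lemma le_max_sub (p₁ p₂ a₁ a₂ : ℝ) :
    min (p₂ - p₁) (a₂ - a₁) ≤ max p₂ a₂ - max p₁ a₁ := by
  have hp := min_le_left (p₂ - p₁) (a₂ - a₁)
  have ha := min_le_right (p₂ - p₁) (a₂ - a₁)
  have hp2 := le_max_left p₂ a₂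
  have ha2 := le_max_right p₂ a₂
  have : max p₁ a₁ ≤ max p₂ a₂ - min (p₂ - p₁) (a₂ - a₁) :=
    max_le (by linarith) (by linarith)
  linarith

lemma V1_le (k : ℕ) (E α β δ₁ δ₂ : ℝ) (hδ : δ₁ ≤ δ₂) (x : ℕ) :
    V k E α β δ₂ 1 x ≤ V k E α β δ₁ 1 x + (δ₂ - δ₁) := by
  cases x with
  | zero =>
      show max δ₂ 0 ≤ max δ₁ 0 + (δ₂ - δ₁)
      have h1 := le_max_left δ₁ (0:ℝ)
      have h2 := le_max_right δ₁ (0:ℝ)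
      exact max_le (by linarith) (by linarith)
  | succ b =>
      show max (δ₂ - F α b) (E - F α (b + 1 - k)) ≤
        max (δ₁ - F α b) (E - F α (b + 1 - k)) + (δ₂ - δ₁)
      have h1 := le_max_left (δ₁ - F α b) (E - F α (b + 1 - k))
      have h2 := le_max_right (δ₁ - F α b) (E - F α (b + 1 - k))
      exact max_le (by linarith) (by linarith)

lemma V1_mono (k : ℕ) (E α β δ₁ δ₂ : ℝ) (hδ : δ₁ ≤ δ₂) (x : ℕ) :
    V k E α β δ₁ 1 x ≤ V k E α β δ₂ 1 x := by
  cases x with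
  | zero =>
      show max δ₁ 0 ≤ max δ₂ 0
      exact max_le_max hδ le_rfl
  | succ b =>
      show max (δ₁ - F α b) (E - F α (b + 1 - k)) ≤
        max (δ₂ - F α b) (E - F α (b + 1 - k))
      exact max_le_max (by linarith) le_rfl

lemma claimC (k : ℕ) (E α β δ₁ δ₂ : ℝ) (hβ0 : 0 < β) (hβ1 : β < 1) (hδ : δ₁ ≤ δ₂) :
    ∀ t b : ℕ,
      V k E α β δ₂ t (b - k) - V k E α β δ₁ t (b - k) ≤
        V k E α β δ₂ t (b - 1) - V k E α β δ₁ t (b - 1) + (δ₂ - δ₁) := by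
  intro t
  induction t with
  | zero =>
      intro b
      show (0:ℝ) - 0 ≤ 0 - 0 + (δ₂ - δ₁)
      linarith
  | succ n ih =>
      cases n with
      | zero =>
          intro b
          have h1 := V1_le k E α β δ₁ δ₂ hδ (b - k)
          have h2 := V1_mono k E α β δ₁ δ₂ hδ (b - 1)
          linarith
      | succ m =>
          intro b
          have e1 : b - k - 1 = b - 1 - k := by omega
          have ih1 := ih (b - 1)
          have ih2 := ih (b - k)
          rw [e1] at ih2
          rw [V_two, V_two, V_two, V_two, e1]
          have hub := max_sub_le
            (δ₁ + β * V k E α β δ₁ (m + 1) (b - k - 1))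
            (δ₂ + β * V k E α β δ₂ (m + 1) (b - k - 1))
            ((if 1 ≤ b - k then E else 0) + β * V k E α β δ₁ (m + 1) (b - k - k))
            ((if 1 ≤ b - k then E else 0) + β * V k E α β δ₂ (m + 1) (b - k - k))
          have hlb := le_max_sub
            (δ₁ + β * V k E α β δ₁ (m + 1) (b - 1 - 1))
            (δ₂ + β * V k E α β δ₂ (m + 1) (b - 1 - 1))
            ((if 1 ≤ b - 1 then E else 0) + β * V k E α β δ₁ (m + 1) (b - 1 - k))
            ((if 1 ≤ b - 1 then E else 0) + β * V k E α β δ₂ (m + 1) (b - 1 - k))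
          rw [e1] at hub
          have hbd : β * (δ₂ - δ₁) ≤ δ₂ - δ₁ := by nlinarith
          have hih1 := mul_le_mul_of_nonneg_left ih1 hβ0.le
          have hih2 := mul_le_mul_of_nonneg_left ih2 hβ0.le
          have key : max
              ((δ₂ + β * V k E α β δ₂ (m + 1) (b - 1 - k)) -
                (δ₁ + β * V k E α β δ₁ (m + 1) (b - 1 - k)))
              (((if 1 ≤ b - k then E else 0) + β * V k E α β δ₂ (m + 1) (b - k - k)) -
                ((if 1 ≤ b - k then E else 0) + β * V k E α β δ₁ (m + 1) (b - k - k))) ≤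
            min
              ((δ₂ + β * V k E α β δ₂ (m + 1) (b - 1 - 1)) -
                (δ₁ + β * V k E α β δ₁ (m + 1) (b - 1 - 1)))
              (((if 1 ≤ b - 1 then E else 0) + β * V k E α β δ₂ (m + 1) (b - 1 - k)) -
                ((if 1 ≤ b - 1 then E else 0) + β * V k E α β δ₁ (m + 1) (b - 1 - k)))
              + (δ₂ - δ₁) := by
            rw [min_def]
            split_ifs <;> exact max_le (by linarith) (by linarith)
          linarith

theorem passive_set_monotone (k : ℕ) (hk : 1 ≤ k) (E α β : ℝ) (hE : 0 ≤ E) (hα : 0 < α)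
    (hβ0 : 0 < β) (hβ1 : β < 1)
    (τ b : ℕ) (hτ : 1 ≤ τ) (δ₁ δ₂ : ℝ) (hδ : δ₁ ≤ δ₂)
    (h1 : 0 ≤ g k E α β δ₁ τ b) :
    0 ≤ g k E α β δ₂ τ b := by
  match τ, hτ with
  | 1, _ =>
      cases b with
      | zero =>
          have h1' : (0:ℝ) ≤ δ₁ := h1
          show (0:ℝ) ≤ δ₂
          linarith
      | succ c =>
          have h1' : (0:ℝ) ≤ δ₁ - F α c - E + F α (c + 1 - k) := h1
          show (0:ℝ) ≤ δ₂ - F α c - E + F α (c + 1 - k)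
          linarith
  | (t + 2), _ =>
      have hc := claimC k E α β δ₁ δ₂ hβ0 hβ1 hδ (t + 1) b
      have h1' : (0:ℝ) ≤ δ₁ + β * V k E α β δ₁ (t + 1) (b - 1) -
          (if 1 ≤ b then E else 0) - β * V k E α β δ₁ (t + 1) (b - k) := h1
      show (0:ℝ) ≤ δ₂ + β * V k E α β δ₂ (t + 1) (b - 1) -
          (if 1 ≤ b then E else 0) - β * V k E α β δ₂ (t + 1) (b - k)
      have hbd : β * (δ₂ - δ₁) ≤ δ₂ - δ₁ := by nlinarith
      have hm := mul_le_mul_of_nonneg_left hc hβ0.le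
      linarith
end

section
/- Strict monotonicity of the passive–active gap in the subsidy: for all integers τ ≥ 1, b ≥ 0 and all reals δ₁ ≤ δ₂, one has g_{δ₂}(τ,b) − g_{δ₁}(τ,b) ≥ (1 − β)·(δ₂ − δ₁); in particular, since 0 < β < 1, the map δ ↦ g_δ(τ,b) is strictly increasing. -/
section Aux

variable {k : ℕ} {E α β δ₁ δ₂ : ℝ}

private lemma V_zero (δ : ℝ) (b : ℕ) : V k E α β δ 0 b = 0 := rfl

private lemma V_one_zero (δ : ℝ) : V k E α β δ 1 0 = max δ 0 := rfl

private lemma V_one_succ (δ : ℝ) (b : ℕ) :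
    V k E α β δ 1 (b + 1) = max (δ - F α b) (E - F α (b + 1 - k)) := rfl

private lemma V_succ_succ (δ : ℝ) (t b : ℕ) :
    V k E α β δ (t + 2) b = max (δ + β * V k E α β δ (t + 1) (b - 1))
      ((if 1 ≤ b then E else 0) + β * V k E α β δ (t + 1) (b - k)) := rfl

/-- V is monotone in δ. -/
private lemma V_mono (hβ : 0 ≤ β) (h : δ₁ ≤ δ₂) :
    ∀ t b, V k E α β δ₁ t b ≤ V k E α β δ₂ t b := by
  intro t
  induction t with
  | zero => intro b; simp [V_zero]
  | succ t ih =>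
    cases t with
    | zero =>
      intro b
      cases b with
      | zero =>
        rw [V_one_zero, V_one_zero]
        exact max_le_max h le_rfl
      | succ b =>
        rw [V_one_succ, V_one_succ]
        exact max_le_max (by linarith) le_rfl
    | succ s =>
      intro b
      rw [V_succ_succ, V_succ_succ]
      exact max_le_max (by have := ih (b - 1); nlinarith)
        (by have := ih (b - k); nlinarith)

/-- At horizon 1, V is (δ₂-δ₁)-Lipschitz in δ. -/
private lemma V_one_lip (h : δ₁ ≤ δ₂) (b : ℕ) :
    V k E α β δ₂ 1 b - V k E α β δ₁ 1 b ≤ δ₂ - δ₁ := by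
  cases b with
  | zero =>
    rw [V_one_zero, V_one_zero]
    have h1 := le_max_left δ₁ (0 : ℝ)
    have h2 := le_max_right δ₁ (0 : ℝ)
    have : max δ₂ 0 ≤ max δ₁ 0 + (δ₂ - δ₁) := max_le (by linarith) (by linarith)
    linarith
  | succ b =>
    rw [V_one_succ, V_one_succ]
    have h1 := le_max_left (δ₁ - F α b) (E - F α (b + 1 - k))
    have h2 := le_max_right (δ₁ - F α b) (E - F α (b + 1 - k))
    have : max (δ₂ - F α b) (E - F α (b + 1 - k)) ≤
        max (δ₁ - F α b) (E - F α (b + 1 - k)) + (δ₂ - δ₁) :=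
      max_le (by linarith) (by linarith)
    linarith

/-- Key invariant: ΔV(t, b-k) - ΔV(t, b-1) ≤ δ₂ - δ₁. -/
private lemma key (hβ0 : 0 ≤ β) (hβ1 : β ≤ 1) (h : δ₁ ≤ δ₂) :
    ∀ t b, (V k E α β δ₂ t (b - k) - V k E α β δ₁ t (b - k))
      - (V k E α β δ₂ t (b - 1) - V k E α β δ₁ t (b - 1)) ≤ δ₂ - δ₁ := by
  have hΔ : (0:ℝ) ≤ δ₂ - δ₁ := by linarith
  intro t
  induction t with
  | zero => intro b; simp [V_zero]; linarith
  | succ t ih =>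
    cases t with
    | zero =>
      intro b
      have h1 := V_one_lip (k := k) (E := E) (α := α) (β := β) h (b - k)
      have h2 := V_mono (k := k) (E := E) (α := α) hβ0 h 1 (b - 1)
      linarith
    | succ s =>
      intro b
      have e1 : b - k - 1 = b - 1 - k := by omega
      have ihk := ih (b - k)
      have ih1 := ih (b - 1)
      set P2 := δ₂ + β * V k E α β δ₂ (s + 1) (b - k - 1) with hP2
      set A2 := (if 1 ≤ b - k then E else 0) + β * V k E α β δ₂ (s + 1) (b - k - k) with hA2
      set P2' := δ₂ + β * V k E α β δ₂ (s + 1) (b - 1 - 1) with hP2'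
      set A2' := (if 1 ≤ b - 1 then E else 0) + β * V k E α β δ₂ (s + 1) (b - 1 - k) with hA2'
      set P1 := δ₁ + β * V k E α β δ₁ (s + 1) (b - k - 1) with hP1
      set A1 := (if 1 ≤ b - k then E else 0) + β * V k E α β δ₁ (s + 1) (b - k - k) with hA1
      set P1' := δ₁ + β * V k E α β δ₁ (s + 1) (b - 1 - 1) with hP1'
      set A1' := (if 1 ≤ b - 1 then E else 0) + β * V k E α β δ₁ (s + 1) (b - 1 - k) with hA1'
      rw [show s + 1 + 1 = s + 2 from rfl, V_succ_succ, V_succ_succ, V_succ_succ, V_succ_succ]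
      rw [← hP2, ← hA2, ← hP2', ← hA2', ← hP1, ← hA1, ← hP1', ← hA1']
      have ihk' := mul_le_mul_of_nonneg_left ihk hβ0
      have ih1' := mul_le_mul_of_nonneg_left ih1 hβ0
      have hbΔ : β * (δ₂ - δ₁) ≤ δ₂ - δ₁ := by nlinarith
      have eA : b - 1 - k = b - k - 1 := e1.symm
      rw [eA] at ih1' ih1
      have cPP : (P2 - P1) - (P2' - P1') ≤ δ₂ - δ₁ := by
        rw [hP2, hP1, hP2', hP1']; linarith [ih1', hbΔ]
      have cAA : (A2 - A1) - (A2' - A1') ≤ δ₂ - δ₁ := by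
        rw [hA2, hA1, hA2', hA1', eA]; linarith [ihk', hbΔ]
      have cPA : (P2 - P1) - (A2' - A1') ≤ δ₂ - δ₁ := by
        rw [hP2, hP1, hA2', hA1', eA]; linarith
      have cAP : (A2 - A1) - (P2' - P1') ≤ δ₂ - δ₁ := by
        rw [hA2, hA1, hP2', hP1']; linarith [ihk', ih1', hbΔ]
      have hub : max P2 A2 - max P1 A1 ≤ max (P2 - P1) (A2 - A1) := by
        rcases max_cases P2 A2 with ⟨h1, _⟩ | ⟨h1, _⟩ <;> rw [h1]
        · linarith [le_max_left P1 A1, le_max_left (P2 - P1) (A2 - A1)]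
        · linarith [le_max_right P1 A1, le_max_right (P2 - P1) (A2 - A1)]
      have hlb : min (P2' - P1') (A2' - A1') ≤ max P2' A2' - max P1' A1' := by
        rcases max_cases P1' A1' with ⟨h1, _⟩ | ⟨h1, _⟩ <;> rw [h1]
        · linarith [le_max_left P2' A2', min_le_left (P2' - P1') (A2' - A1')]
        · linarith [le_max_right P2' A2', min_le_right (P2' - P1') (A2' - A1')]
      rcases max_cases (P2 - P1) (A2 - A1) with ⟨hm, _⟩ | ⟨hm, _⟩ <;>
        rcases min_cases (P2' - P1') (A2' - A1') with ⟨hn, _⟩ | ⟨hn, _⟩ <;>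
          rw [hm] at hub <;> rw [hn] at hlb <;> linarith

end Aux

theorem gap_strict_monotone (k : ℕ) (hk : 1 ≤ k) (E α β : ℝ) (hE : 0 ≤ E) (hα : 0 < α)
    (hβ0 : 0 < β) (hβ1 : β < 1)
    (τ b : ℕ) (hτ : 1 ≤ τ) :
    (∀ δ₁ δ₂ : ℝ, δ₁ ≤ δ₂ →
      g k E α β δ₂ τ b - g k E α β δ₁ τ b ≥ (1 - β) * (δ₂ - δ₁)) ∧
    StrictMono (fun δ : ℝ => g k E α β δ τ b) := by
  have main : ∀ δ₁ δ₂ : ℝ, δ₁ ≤ δ₂ →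
      g k E α β δ₂ τ b - g k E α β δ₁ τ b ≥ (1 - β) * (δ₂ - δ₁) := by
    intro δ₁ δ₂ h
    have hΔ : (0:ℝ) ≤ δ₂ - δ₁ := by linarith
    have hβΔ : 0 ≤ β * (δ₂ - δ₁) := mul_nonneg hβ0.le hΔ
    match τ, hτ with
    | 1, _ =>
      cases b with
      | zero => show δ₂ - δ₁ ≥ _; nlinarith
      | succ b =>
        show (δ₂ - F α b - E + F α (b + 1 - k)) - (δ₁ - F α b - E + F α (b + 1 - k)) ≥ _
        nlinarith
    | (t + 2), _ =>
      have hkey := key (k := k) (E := E) (α := α) hβ0.le hβ1.le h (t + 1) b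
      show (δ₂ + β * V k E α β δ₂ (t + 1) (b - 1) - _ - β * V k E α β δ₂ (t + 1) (b - k))
        - (δ₁ + β * V k E α β δ₁ (t + 1) (b - 1) - _ - β * V k E α β δ₁ (t + 1) (b - k)) ≥ _
      have := mul_le_mul_of_nonneg_left hkey hβ0.le
      nlinarith
  refine ⟨main, ?_⟩
  intro δ₁ δ₂ hlt
  have := main δ₁ δ₂ hlt.le
  have hpos : 0 < (1 - β) * (δ₂ - δ₁) := mul_pos (by linarith) (by linarith)
  simp only
  linarith
end

section
/- Slope bound for the value function in the subsidy (piecewise-linearity with bounded slopes): for all integers τ ≥ 1, b ≥ 0 and all reals δ₁ ≤ δ₂, one has 0 ≤ V_{δ₂}(τ,b) − V_{δ₁}(τ,b) ≤ (∑_{i=0}^{τ−1} β^i)·(δ₂ − δ₁) = ((1 − β^τ)/(1 − β))·(δ₂ − δ₁). -/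
private lemma max_diff_bound {a₁ a₂ c₁ c₂ M : ℝ} (h1 : 0 ≤ a₂ - a₁) (h2 : a₂ - a₁ ≤ M)
    (h3 : 0 ≤ c₂ - c₁) (h4 : c₂ - c₁ ≤ M) :
    0 ≤ max a₂ c₂ - max a₁ c₁ ∧ max a₂ c₂ - max a₁ c₁ ≤ M := by
  constructor
  · have := max_le_max (by linarith : a₁ ≤ a₂) (by linarith : c₁ ≤ c₂); linarith
  · have h5 : a₂ ≤ max a₁ c₁ + M :=
      le_trans (by linarith) (add_le_add_left (le_max_left a₁ c₁) M)
    have h6 : c₂ ≤ max a₁ c₁ + M :=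
      le_trans (by linarith) (add_le_add_left (le_max_right a₁ c₁) M)
    have := max_le h5 h6; linarith

private lemma V_diff_bound (k : ℕ) (E α β : ℝ) (hβ0 : 0 < β)
    (δ₁ δ₂ : ℝ) (hδ : δ₁ ≤ δ₂) :
    ∀ τ b, 0 ≤ V k E α β δ₂ τ b - V k E α β δ₁ τ b ∧
      V k E α β δ₂ τ b - V k E α β δ₁ τ b ≤ (∑ i ∈ Finset.range τ, β ^ i) * (δ₂ - δ₁) := by
  intro τ
  induction τ with
  | zero => intro b; simp [V]
  | succ t ih =>
    intro b
    match t, b with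
    | 0, 0 =>
      simp only [V, zero_add, Finset.range_one, Finset.sum_singleton, pow_zero, one_mul]
      exact max_diff_bound (by linarith) (by linarith) (by linarith) (by linarith)
    | 0, b + 1 =>
      simp only [V, zero_add, Finset.range_one, Finset.sum_singleton, pow_zero, one_mul]
      exact max_diff_bound (by linarith) (by linarith) (by linarith) (by linarith)
    | t + 1, b =>
      have h1 := ih (b - 1)
      have h2 := ih (b - k)
      simp only [V]
      have hS : (∑ i ∈ Finset.range (t + 2), β ^ i)
          = 1 + β * ∑ i ∈ Finset.range (t + 1), β ^ i := by
        rw [Finset.sum_range_succ', pow_zero]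
        simp [Finset.mul_sum, ← pow_succ', add_comm]
      rw [hS]
      have hd : 0 ≤ δ₂ - δ₁ := by linarith
      have hb1 : β * (V k E α β δ₂ (t + 1) (b - 1) - V k E α β δ₁ (t + 1) (b - 1))
          ≤ β * ((∑ i ∈ Finset.range (t + 1), β ^ i) * (δ₂ - δ₁)) :=
        mul_le_mul_of_nonneg_left h1.2 (le_of_lt hβ0)
      have hb2 : β * (V k E α β δ₂ (t + 1) (b - k) - V k E α β δ₁ (t + 1) (b - k))
          ≤ β * ((∑ i ∈ Finset.range (t + 1), β ^ i) * (δ₂ - δ₁)) :=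
        mul_le_mul_of_nonneg_left h2.2 (le_of_lt hβ0)
      have hn1 : 0 ≤ β * (V k E α β δ₂ (t + 1) (b - 1) - V k E α β δ₁ (t + 1) (b - 1)) :=
        mul_nonneg (le_of_lt hβ0) h1.1
      have hn2 : 0 ≤ β * (V k E α β δ₂ (t + 1) (b - k) - V k E α β δ₁ (t + 1) (b - k)) :=
        mul_nonneg (le_of_lt hβ0) h2.1
      exact max_diff_bound (by nlinarith) (by nlinarith) (by nlinarith) (by nlinarith)

theorem value_slope_bound (k : ℕ) (hk : 1 ≤ k) (E α β : ℝ) (hE : 0 ≤ E) (hα : 0 < α)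
    (hβ0 : 0 < β) (hβ1 : β < 1)
    (τ b : ℕ) (hτ : 1 ≤ τ) (δ₁ δ₂ : ℝ) (hδ : δ₁ ≤ δ₂) :
    0 ≤ V k E α β δ₂ τ b - V k E α β δ₁ τ b ∧
    V k E α β δ₂ τ b - V k E α β δ₁ τ b
      ≤ (∑ i ∈ Finset.range τ, β ^ i) * (δ₂ - δ₁) ∧
    (∑ i ∈ Finset.range τ, β ^ i) * (δ₂ - δ₁)
      = ((1 - β ^ τ) / (1 - β)) * (δ₂ - δ₁) := by
  obtain ⟨h1, h2⟩ := V_diff_bound k E α β hβ0 δ₁ δ₂ hδ τ b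
  refine ⟨h1, h2, ?_⟩
  rw [geom_sum_eq (by linarith : β ≠ 1)]
  congr 1
  rw [div_eq_div_iff (by linarith) (by linarith)]
  ring
end

section
/- Closed-form Whittle index (Theorem 2): for every integer τ ≥ 1 and integer b ≥ 0, the Whittle index satisfies: ω(τ,0) = 0; ω(τ,b) = E if 1 ≤ b ≤ (τ−1)·k + 1; ω(τ,b) = E + β^{τ−1}·α·(b − k·τ + k − 1)² if k·τ − k + 2 ≤ b ≤ k·τ; and ω(τ,b) = E + β^{τ−1}·α·( (b − k·τ + k − 1)² − (b − k·τ)² ) if b ≥ k·τ + 1. -/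
namespace WProof

noncomputable def Sg (β : ℝ) (n : ℕ) : ℝ := ∑ i ∈ Finset.range n, β ^ i

lemma Sg_zero (β : ℝ) : Sg β 0 = 0 := by simp [Sg]

lemma Sg_one (β : ℝ) : Sg β 1 = 1 := by simp [Sg]

lemma Sg_succ (β : ℝ) (n : ℕ) : Sg β (n + 1) = 1 + β * Sg β n := by
  simp [Sg, geom_sum_succ]; ring

lemma Sg_succ' (β : ℝ) (n : ℕ) : Sg β (n + 1) = Sg β n + β ^ n := by
  simp [Sg, Finset.sum_range_succ]

lemma Sg_nonneg {β : ℝ} (hβ0 : 0 < β) (n : ℕ) : 0 ≤ Sg β n :=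
  Finset.sum_nonneg fun i _ => (pow_pos hβ0 i).le

lemma Sg_mono {β : ℝ} (hβ0 : 0 < β) {a b : ℕ} (h : a ≤ b) : Sg β a ≤ Sg β b := by
  apply Finset.sum_le_sum_of_subset_of_nonneg (Finset.range_subset_range.2 h)
  exact fun i _ _ => (pow_pos hβ0 i).le

/-- ceil(b/k) -/
def mf (k b : ℕ) : ℕ := if b = 0 then 0 else (b - 1) / k + 1

lemma mf_zero (k : ℕ) : mf k 0 = 0 := rfl

lemma mf_pos (k : ℕ) {b : ℕ} (hb : 1 ≤ b) : 1 ≤ mf k b := by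
  have hb' : b ≠ 0 := by omega
  unfold mf; rw [if_neg hb']
  exact Nat.succ_le_succ (Nat.zero_le _)

lemma mf_sub_k {k : ℕ} (hk : 1 ≤ k) {b : ℕ} (hb : 1 ≤ b) : mf k (b - k) = mf k b - 1 := by
  have hb' : b ≠ 0 := by omega
  rcases le_or_gt b k with h | h
  · have h1 : b - k = 0 := by omega
    have h2 : (b - 1) / k = 0 := Nat.div_eq_of_lt (by omega)
    unfold mf
    rw [h1, if_pos rfl, if_neg hb', h2]
  · have h1 : b - k ≠ 0 := by omega
    unfold mf
    rw [if_neg h1, if_neg hb']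
    have h3 : b - 1 = (b - k - 1) + k := by omega
    rw [h3, Nat.add_div_right _ (by omega : 0 < k)]
    generalize (b - k - 1) / k = q
    omega

lemma mf_mono (k : ℕ) {a b : ℕ} (h : a ≤ b) : mf k a ≤ mf k b := by
  rcases Nat.eq_zero_or_pos a with ha | ha
  · subst ha; simp [mf]
  · have ha' : a ≠ 0 := by omega
    have hb' : b ≠ 0 := by omega
    unfold mf; rw [if_neg ha', if_neg hb']
    have h2 := Nat.div_le_div_right (c := k) (by omega : a - 1 ≤ b - 1)
    generalize hq1 : (a - 1) / k = q1 at *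
    generalize hq2 : (b - 1) / k = q2 at *
    omega

lemma mf_ge {k : ℕ} (hk : 1 ≤ k) {m b : ℕ} (h : k * m + 1 ≤ b) : m + 1 ≤ mf k b := by
  have hb : b ≠ 0 := by omega
  unfold mf; rw [if_neg hb]
  have h2 : m * k ≤ b - 1 := by have := Nat.mul_comm m k; omega
  have h3 : m ≤ (b - 1) / k := (Nat.le_div_iff_mul_le (by omega)).2 h2
  generalize hq : (b - 1) / k = q at *
  omega


noncomputable def Wf (k : ℕ) (E α β : ℝ) (τ b : ℕ) : ℝ :=
  E + β ^ (τ - 1) * α * (((b : ℝ) - k * τ + k - 1) ^ 2 - ((b - k * τ : ℕ) : ℝ) ^ 2)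

lemma Wf_succ (k : ℕ) (E α β : ℝ) (t b : ℕ) :
    Wf k E α β (t + 1) b
      = E + β ^ t * α * (((b : ℝ) - k * (t + 1) + k - 1) ^ 2 - ((b - k * (t + 1) : ℕ) : ℝ) ^ 2) := by
  unfold Wf
  norm_num

section facts

variable {k t b : ℕ} {E α β : ℝ}

lemma Wf_facts (hk : 1 ≤ k) (hb : k * t + 1 ≤ b) :
    0 ≤ (b : ℝ) - k * (t + 1) + k - 1 ∧ 0 ≤ ((b - k * (t + 1) : ℕ) : ℝ) ∧
      ((b - k * (t + 1) : ℕ) : ℝ) ≤ (b : ℝ) - k * (t + 1) + k - 1 ∧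
      ((b : ℝ) - k * (t + 1) + k - 1) - ((k : ℝ) - 1) ≤ ((b - k * (t + 1) : ℕ) : ℝ) := by
  have e1 : k * (t + 1) = k * t + k := by ring
  have hc : ((k * t + 1 : ℕ) : ℝ) ≤ (b : ℝ) := Nat.cast_le.2 hb
  push_cast at hc
  have hk' : (1 : ℝ) ≤ (k : ℝ) := by exact_mod_cast hk
  rcases le_or_gt (k * (t + 1)) b with h | h
  · have hcast : ((b - k * (t + 1) : ℕ) : ℝ) = (b : ℝ) - (k : ℝ) * ((t : ℝ) + 1) := by
      rw [Nat.cast_sub h]; push_cast; ring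
    rw [hcast]
    push_cast
    constructor
    · nlinarith
    refine ⟨by nlinarith, by nlinarith, by nlinarith⟩
  · have h0 : b - k * (t + 1) = 0 := Nat.sub_eq_zero_of_le h.le
    have hcR : ((b : ℝ)) ≤ (k : ℝ) * ((t : ℝ) + 1) - 1 := by
      have h' : (b : ℕ) + 1 ≤ k * (t + 1) := h
      have h'' : (((b + 1 : ℕ)) : ℝ) ≤ ((k * (t + 1) : ℕ) : ℝ) := Nat.cast_le.2 h'
      push_cast at h''
      linarith
    rw [h0]
    push_cast
    refine ⟨by nlinarith, le_refl 0, by nlinarith, by nlinarith⟩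

lemma Wf_ge_E (hk : 1 ≤ k) (hα : 0 < α) (hβ0 : 0 < β) (hb : k * t + 1 ≤ b) :
    E ≤ Wf k E α β (t + 1) b := by
  obtain ⟨hA, hB0, hBA, _⟩ := Wf_facts hk hb
  rw [Wf_succ]
  have h2 : ((b - k * (t + 1) : ℕ) : ℝ) ^ 2 ≤ ((b : ℝ) - k * (t + 1) + k - 1) ^ 2 := by
    nlinarith
  have hp : (0 : ℝ) ≤ β ^ t := (pow_pos hβ0 t).le
  nlinarith [mul_nonneg hp hα.le]

lemma Wf_mono_act (hk : 1 ≤ k) (hα : 0 < α) (hβ0 : 0 < β) (hβ1 : β < 1)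
    (hb : k * (t + 1) + 1 ≤ b) :
    Wf k E α β (t + 2) b ≤ Wf k E α β (t + 1) (b - k) := by
  have e1 : k * (t + 1) = k * t + k := by ring
  have e2 : k * (t + 2) = k * (t + 1) + k := by ring
  have hbk : k ≤ b := by omega
  obtain ⟨hA, hB0, hBA, _⟩ := Wf_facts hk (show k * (t + 1) + 1 ≤ b by omega)
  have hc1 : ((b - k : ℕ) : ℝ) = (b : ℝ) - (k : ℝ) := by rw [Nat.cast_sub hbk]
  have hc2 : b - k - k * (t + 1) = b - k * (t + 2) := by omega
  rw [show t + 2 = (t + 1) + 1 from rfl, Wf_succ, Wf_succ, hc1, hc2,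
    show k * (t + 1 + 1) = k * (t + 2) from by ring] at *
  push_cast at hA hB0 hBA ⊢
  have hD : 0 ≤ ((b : ℝ) - (k : ℝ) * ((t : ℝ) + 1 + 1) + k - 1) ^ 2
      - ((b - k * (t + 2) : ℕ) : ℝ) ^ 2 := by nlinarith
  have hp : β ^ (t + 1) ≤ β ^ t := pow_le_pow_of_le_one hβ0.le hβ1.le (Nat.le_succ t)
  nlinarith [mul_le_mul_of_nonneg_right hp (mul_nonneg hα.le hD)]

lemma Wf_mono_pass (hk : 1 ≤ k) (hα : 0 < α) (hβ0 : 0 < β) (hβ1 : β < 1)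
    (hb : k * (t + 1) + 1 ≤ b) :
    Wf k E α β (t + 2) b ≤ Wf k E α β (t + 1) (b - 1) := by
  have e2 : k * (t + 2) = k * (t + 1) + k := by ring
  obtain ⟨hA, hB0, hBA, hABc⟩ := Wf_facts hk (show k * (t + 1) + 1 ≤ b by omega)
  have hk' : (1 : ℝ) ≤ (k : ℝ) := by exact_mod_cast hk
  have hb1 : k * (t + 1) ≤ b - 1 := by omega
  have hc1 : ((b - 1 - k * (t + 1) : ℕ) : ℝ) = (b : ℝ) - 1 - (k : ℝ) * ((t : ℝ) + 1) := by
    rw [show b - 1 - k * (t + 1) = b - (k * (t + 1) + 1) from by omega,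
      Nat.cast_sub (by omega)]
    push_cast; ring
  have hcb1 : ((b - 1 : ℕ) : ℝ) = (b : ℝ) - 1 := by
    rw [Nat.cast_sub (by omega)]; norm_num
  rw [show t + 2 = (t + 1) + 1 from rfl, Wf_succ, Wf_succ, hc1, hcb1]
  set x := (b : ℝ)
  set K := (k : ℝ)
  push_cast at hA hB0 hBA hABc ⊢
  set Bc := ((b - k * (t + 1 + 1) : ℕ) : ℝ) with hBc
  have h1 : x - K * ((t:ℝ) + 1 + 1) + K - 1 = (x - 1 - K * ((t:ℝ) + 1)) := by ring
  -- goal : E + β^(t+1) * α * ((x - K*(t+2)+K-1)^2 - Bc^2) ≤ E + β^t*α*((x-1-K*(t+1)+K-1)^2 - (x-1-K*(t+1))^2)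
  set A := x - K * ((t:ℝ) + 1 + 1) + K - 1 with hAd
  have hA2 : x - 1 - K * ((t:ℝ) + 1) + K - 1 = A + (K - 1) := by rw [hAd]; ring
  have hA3 : x - 1 - K * ((t:ℝ) + 1) = A := by rw [hAd]; ring
  rw [hA2, hA3]
  have hc : (0:ℝ) ≤ K - 1 := by linarith
  have hD1 : 0 ≤ A ^ 2 - Bc ^ 2 := by nlinarith
  have hD2 : A ^ 2 - Bc ^ 2 ≤ (A + (K - 1)) ^ 2 - A ^ 2 := by nlinarith
  have hp : β ^ (t + 1) ≤ β ^ t := pow_le_pow_of_le_one hβ0.le hβ1.le (Nat.le_succ t)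
  have hpt : (0:ℝ) < β ^ t := pow_pos hβ0 t
  nlinarith [mul_le_mul_of_nonneg_right hp (mul_nonneg hα.le hD1),
    mul_le_mul_of_nonneg_left hD2 (mul_nonneg hpt.le hα.le)]

end facts


section main

variable {k : ℕ} {E α β : ℝ}

lemma VE (hk : 1 ≤ k) (hE : 0 ≤ E) (hα : 0 < α) (hβ0 : 0 < β) :
    ∀ t b, V k E α β E (t + 1) b
      = E * Sg β (t + 1) - β ^ t * α * ((b - k * (t + 1) : ℕ) : ℝ) ^ 2 := by
  intro t
  induction t with
  | zero =>
    intro b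
    match b with
    | 0 =>
      have h0 : (0 : ℕ) - k * 1 = 0 := by omega
      simp only [V, h0]
      rw [Sg_one]
      simp [hE]
    | b' + 1 =>
      simp only [V, F]
      have h1 : b' + 1 - k * 1 = b' + 1 - k := by rw [mul_one]
      have hle : (b' + 1 - k : ℕ) ≤ b' := by omega
      have hcast : ((b' + 1 - k : ℕ) : ℝ) ≤ (b' : ℝ) := Nat.cast_le.2 hle
      have hsq : ((b' + 1 - k : ℕ) : ℝ) ^ 2 ≤ (b' : ℝ) ^ 2 := by
        have := Nat.cast_nonneg (α := ℝ) (b' + 1 - k)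
        nlinarith
      rw [max_eq_right (by nlinarith)]
      rw [Sg_one, h1]
      ring
  | succ t IH =>
    intro b
    match b with
    | 0 =>
      rw [V]
      have h1 : (0 : ℕ) - 1 = 0 := rfl
      have h2 : (0 : ℕ) - k = 0 := by omega
      rw [h1, h2, IH 0]
      have h3 : (0 : ℕ) - k * (t + 1) = 0 := by omega
      have h4 : (0 : ℕ) - k * (t + 2) = 0 := by omega
      rw [h3, h4, if_neg (by omega)]
      rw [max_eq_left (by nlinarith [hE] : (0:ℝ) + (β * (E * Sg β (t + 1) - β ^ t * α * ((0:ℕ) : ℝ) ^ 2)) ≤ E + β * (E * Sg β (t + 1) - β ^ t * α * ((0:ℕ) : ℝ) ^ 2))]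
      rw [Sg_succ β (t + 1)]
      push_cast
      ring
    | b' + 1 =>
      rw [V, if_pos (by omega), IH (b' + 1 - 1), IH (b' + 1 - k)]
      have h1 : b' + 1 - 1 = b' := rfl
      have h2 : b' + 1 - k - k * (t + 1) = b' + 1 - k * (t + 2) := by
        have : k * (t + 2) = k * (t + 1) + k := by ring
        omega
      rw [h1, h2]
      have hle : (b' + 1 - k * (t + 2) : ℕ) ≤ (b' - k * (t + 1) : ℕ) := by
        have : k * (t + 2) = k * (t + 1) + k := by ring
        omega
      have hcast : ((b' + 1 - k * (t + 2) : ℕ) : ℝ) ≤ ((b' - k * (t + 1) : ℕ) : ℝ) :=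
        Nat.cast_le.2 hle
      have hsq : ((b' + 1 - k * (t + 2) : ℕ) : ℝ) ^ 2 ≤ ((b' - k * (t + 1) : ℕ) : ℝ) ^ 2 := by
        have := Nat.cast_nonneg (α := ℝ) (b' + 1 - k * (t + 2))
        nlinarith
      have hbp : (0:ℝ) < β ^ t := pow_pos hβ0 t
      have hint := mul_le_mul_of_nonneg_left hsq
        (mul_nonneg (mul_nonneg hβ0.le hbp.le) hα.le)
      rw [max_eq_right (by nlinarith [hint])]
      rw [show k * (t + 1 + 1) = k * (t + 2) from by ring, Sg_succ β (t + 1)]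
      ring

lemma L1 (hk : 1 ≤ k) (hE : 0 ≤ E) (hα : 0 < α) (hβ0 : 0 < β) (hβ1 : β < 1) :
    ∀ t b, k * t + 1 ≤ b → ∀ δ, δ ≤ Wf k E α β (t + 1) b →
      V k E α β δ (t + 1) b
          = E * Sg β (t + 1) - β ^ t * α * ((b - k * (t + 1) : ℕ) : ℝ) ^ 2 ∧
        g k E α β δ (t + 1) b = δ - Wf k E α β (t + 1) b := by
  intro t
  induction t with
  | zero =>
    intro b hb δ hδ
    match b, hb with
    | b' + 1, _ =>
      have h1 : b' + 1 - k * 1 = b' + 1 - k := by rw [mul_one]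
      have hWf : Wf k E α β 1 (b' + 1)
          = E + α * ((b' : ℝ) ^ 2 - ((b' + 1 - k : ℕ) : ℝ) ^ 2) := by
        rw [show (1:ℕ) = 0 + 1 from rfl, Wf_succ, h1]
        push_cast
        ring
      rw [hWf] at hδ
      constructor
      · simp only [V, F]
        rw [max_eq_right (by nlinarith), Sg_one, h1]
        ring
      · simp only [g, F]
        rw [hWf]
        ring
  | succ t IH =>
    intro b hb δ hδ
    have e1 : k * (t + 1) = k * t + k := by ring
    have e2 : k * (t + 2) = k * (t + 1) + k := by ring
    have hb1 : k * t + 1 ≤ b - 1 := by omega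
    have hbk : k * t + 1 ≤ b - k := by omega
    have hW1 : Wf k E α β (t + 2) b ≤ Wf k E α β (t + 1) (b - 1) :=
      Wf_mono_pass hk hα hβ0 hβ1 hb
    have hW2 : Wf k E α β (t + 2) b ≤ Wf k E α β (t + 1) (b - k) :=
      Wf_mono_act hk hα hβ0 hβ1 hb
    obtain ⟨hV1, -⟩ := IH (b - 1) hb1 δ (hδ.trans hW1)
    obtain ⟨hV2, -⟩ := IH (b - k) hbk δ (hδ.trans hW2)
    have hc1 : ((b - 1 - k * (t + 1) : ℕ) : ℝ) = (b : ℝ) - (k : ℝ) * ((t : ℝ) + 1) - 1 := by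
      rw [show b - 1 - k * (t + 1) = b - (k * (t + 1) + 1) from by omega,
        Nat.cast_sub (by omega)]
      push_cast
      ring
    have hc2 : b - k - k * (t + 1) = b - k * (t + 2) := by omega
    have hgoal : g k E α β δ (t + 2) b = δ - Wf k E α β (t + 2) b := by
      rw [show t + 2 = (t + 1) + 1 from rfl] at *
      rw [g, if_pos (by omega), hV1, hV2, hc1, hc2, Wf_succ]
      push_cast
      ring
    refine ⟨?_, hgoal⟩
    rw [show t + 2 = (t + 1) + 1 from rfl] at *
    rw [V, if_pos (by omega), hV1, hV2]
    have hpass : δ + β * (E * Sg β (t + 1) - β ^ t * α * ((b - 1 - k * (t + 1) : ℕ) : ℝ) ^ 2)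
        ≤ E + β * (E * Sg β (t + 1) - β ^ t * α * ((b - k - k * (t + 1) : ℕ) : ℝ) ^ 2) := by
      have hg2 := hgoal
      rw [g, if_pos (by omega), hV1, hV2] at hg2
      have hle : δ - Wf k E α β (t + 1 + 1) b ≤ 0 := by linarith
      linarith [hg2.le.trans hle]
    rw [max_eq_right hpass, hc2, Sg_succ β (t + 1)]
    ring

lemma L2 (hk : 1 ≤ k) (hE : 0 ≤ E) (hα : 0 < α) (hβ0 : 0 < β) (hβ1 : β < 1) :
    ∀ t b, b ≤ k * t + 1 → ∀ δ, δ ≤ E →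
      V k E α β δ (t + 1) b
          = max δ 0 * Sg β (t + 1) + (E - max δ 0) * Sg β (mf k b) ∧
        (1 ≤ b → g k E α β δ (t + 1) b ≤ δ - E + β * (E - max δ 0)) := by
  intro t
  induction t with
  | zero =>
    intro b hb δ hδE
    have hME : max δ 0 ≤ E := max_le hδE hE
    match b, hb with
    | 0, _ =>
      refine ⟨?_, by omega⟩
      simp only [V, mf_zero, Sg_zero]
      rw [show (0:ℕ) + 1 = 1 from rfl, Sg_one]
      ring
    | 1, _ =>
      have h10 : (1 : ℕ) - k = 0 := by omega
      have hmf1 : mf k 1 = 1 := by unfold mf; norm_num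
      constructor
      · simp only [V, F, h10]
        norm_num
        rw [max_eq_right hδE, hmf1, Sg_one]
        ring
      · intro _
        simp only [g, F, h10]
        have : (0:ℝ) ≤ β * (E - max δ 0) := by
          apply mul_nonneg hβ0.le
          linarith
        push_cast
        nlinarith
  | succ t IH =>
    intro b hb δ hδE
    have e1 : k * (t + 1) = k * t + k := by ring
    set M := max δ 0 with hMdef
    have hM0 : 0 ≤ M := le_max_right δ 0
    have hδM : δ ≤ M := le_max_left δ 0
    have hME : M ≤ E := max_le hδE hE
    rcases Nat.eq_zero_or_pos b with rfl | hb1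
    · refine ⟨?_, by omega⟩
      rw [V]
      have hz1 : (0 : ℕ) - 1 = 0 := rfl
      have hzk : (0 : ℕ) - k = 0 := by omega
      rw [hz1, hzk, if_neg (by omega)]
      obtain ⟨IH0, -⟩ := IH 0 (by omega) δ hδE
      rw [IH0, mf_zero, Sg_zero, max_add_add_right, Sg_succ β (t + 1)]
      ring
    · have hb1' : 1 ≤ b := hb1
      have hbk : b - k ≤ k * t + 1 := by omega
      obtain ⟨IHk, -⟩ := IH (b - k) hbk δ hδE
      rw [mf_sub_k hk hb1] at IHk
      have hmb1 : 1 ≤ mf k b := mf_pos k hb1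
      have hSgmb : Sg β (mf k b) = 1 + β * Sg β (mf k b - 1) := by
        have h := Sg_succ β (mf k b - 1)
        rw [show mf k b - 1 + 1 = mf k b from by omega] at h
        exact h
      have hact : E + β * V k E α β δ (t + 1) (b - k)
          = M * Sg β (t + 1 + 1) + (E - M) * Sg β (mf k b) := by
        rw [IHk, Sg_succ β (t + 1), hSgmb]
        ring
      have hEM0 : (0:ℝ) ≤ E - M := by linarith
      have hgle : δ + β * V k E α β δ (t + 1) (b - 1)
          - (E + β * V k E α β δ (t + 1) (b - k)) ≤ δ - E + β * (E - M) := by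
        rcases le_or_gt (b - 1) (k * t + 1) with hA | hB
        · obtain ⟨IH1, -⟩ := IH (b - 1) hA δ hδE
          have hm1 : mf k (b - 1) ≤ mf k b := mf_mono k (Nat.sub_le b 1)
          have h1 : Sg β (mf k (b - 1)) ≤ Sg β (mf k b) := Sg_mono hβ0 hm1
          have h3 : β ^ (mf k b - 1) ≤ 1 := pow_le_one₀ hβ0.le hβ1.le
          have h2 : Sg β (mf k b) = Sg β (mf k b - 1) + β ^ (mf k b - 1) := by
            have h := Sg_succ' β (mf k b - 1)
            rw [show mf k b - 1 + 1 = mf k b from by omega] at h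
            exact h
          have h4 : Sg β (mf k (b - 1)) ≤ Sg β (mf k b - 1) + 1 := by linarith
          rw [IH1, IHk]
          nlinarith [mul_le_mul_of_nonneg_left h4 (mul_nonneg hβ0.le hEM0)]
        · have hb1dom : k * t + 1 ≤ b - 1 := by omega
          have hWge : E ≤ Wf k E α β (t + 1) (b - 1) := Wf_ge_E hk hα hβ0 hb1dom
          obtain ⟨hV1, -⟩ := L1 hk hE hα hβ0 hβ1 t (b - 1) hb1dom δ (hδE.trans hWge)
          have hzero : b - 1 - k * (t + 1) = 0 := by omega
          rw [hzero] at hV1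
          norm_num at hV1
          have hdom : k * t + 1 ≤ b := by omega
          have hmb := mf_ge hk hdom
          have h1 : Sg β t ≤ Sg β (mf k b - 1) := Sg_mono hβ0 (by omega)
          have h2 : Sg β (t + 1) = Sg β t + β ^ t := Sg_succ' β t
          have h3 : β ^ t ≤ 1 := pow_le_one₀ hβ0.le hβ1.le
          have h4 : Sg β (t + 1) ≤ Sg β (mf k b - 1) + 1 := by linarith
          rw [hV1, IHk]
          nlinarith [mul_le_mul_of_nonneg_left h4 (mul_nonneg hβ0.le hEM0)]
      have hEMb : β * (E - M) ≤ E - M := by nlinarith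
      have hpa : δ + β * V k E α β δ (t + 1) (b - 1)
          ≤ E + β * V k E α β δ (t + 1) (b - k) := by linarith
      constructor
      · rw [V, if_pos hb1', max_eq_right hpa]
        exact hact
      · intro _
        rw [g, if_pos hb1']
        linarith

lemma g_zero (hk : 1 ≤ k) (δ : ℝ) (t : ℕ) : g k E α β δ (t + 1) 0 = δ := by
  cases t with
  | zero => simp [g]
  | succ t =>
    rw [g]
    have h1 : (0:ℕ) - 1 = 0 := rfl
    have h2 : (0:ℕ) - k = 0 := by omega
    rw [h1, h2, if_neg (by omega)]
    ring

lemma gE (hk : 1 ≤ k) (hE : 0 ≤ E) (hα : 0 < α) (hβ0 : 0 < β) (t b : ℕ)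
    (hb1 : 1 ≤ b) (hb2 : b ≤ k * t + 1) : g k E α β E (t + 1) b = 0 := by
  cases t with
  | zero =>
    obtain rfl : b = 1 := by omega
    have h10 : (1:ℕ) - k = 0 := by omega
    simp only [g, F, h10]
    push_cast
    ring
  | succ t =>
    have e1 : k * (t + 1) = k * t + k := by ring
    rw [g, if_pos hb1, VE hk hE hα hβ0 t (b - 1), VE hk hE hα hβ0 t (b - k)]
    have h1 : b - 1 - k * (t + 1) = 0 := by omega
    have h2 : b - k - k * (t + 1) = 0 := by omega
    rw [h1, h2]
    ring

end main


end WProof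

theorem whittle_closed_form (k : ℕ) (hk : 1 ≤ k) (E α β : ℝ) (hE : 0 ≤ E) (hα : 0 < α)
    (hβ0 : 0 < β) (hβ1 : β < 1)
    (τ : ℕ) (hτ : 1 ≤ τ) :
    whittle k E α β τ 0 = 0 ∧
    (∀ b : ℕ, 1 ≤ b → b ≤ (τ - 1) * k + 1 → whittle k E α β τ b = E) ∧
    (∀ b : ℕ, k * τ - k + 2 ≤ b → b ≤ k * τ → whittle k E α β τ b = E + β ^ (τ - 1) * α * ((b : ℝ) - k * τ + k - 1) ^ 2) ∧
    (∀ b : ℕ, k * τ + 1 ≤ b → whittle k E α β τ b = E + β ^ (τ - 1) * α * (((b : ℝ) - k * τ + k - 1) ^ 2 - ((b : ℝ) - k * τ) ^ 2)) := by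
  obtain ⟨t, rfl⟩ : ∃ t, τ = t + 1 := ⟨τ - 1, by omega⟩
  have e1 : k * (t + 1) = k * t + k := by ring
  have hWhit : ∀ b, k * t + 1 ≤ b →
      whittle k E α β (t + 1) b = WProof.Wf k E α β (t + 1) b := by
    intro b hb
    have hLeast : IsLeast {δ : ℝ | 0 ≤ g k E α β δ (t + 1) b} (WProof.Wf k E α β (t + 1) b) := by
      constructor
      · show (0:ℝ) ≤ g k E α β (WProof.Wf k E α β (t + 1) b) (t + 1) b
        rw [(WProof.L1 hk hE hα hβ0 hβ1 t b hb _ le_rfl).2]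
        simp
      · intro δ hδ
        by_contra hlt
        push_neg at hlt
        have hg := (WProof.L1 hk hE hα hβ0 hβ1 t b hb δ hlt.le).2
        simp only [Set.mem_setOf_eq] at hδ
        rw [hg] at hδ
        linarith
    rw [whittle, hLeast.csInf_eq]
  refine ⟨?_, ?_, ?_, ?_⟩
  · have hset : {δ : ℝ | 0 ≤ g k E α β δ (t + 1) 0} = Set.Ici (0:ℝ) := by
      ext δ
      simp [WProof.g_zero hk δ t]
    rw [whittle, hset, csInf_Ici]
  · intro b hb1 hb2
    simp only [Nat.add_sub_cancel] at hb2
    have hb2' : b ≤ k * t + 1 := by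
      have h := Nat.mul_comm t k
      omega
    have hLeast : IsLeast {δ : ℝ | 0 ≤ g k E α β δ (t + 1) b} E := by
      constructor
      · show (0:ℝ) ≤ g k E α β E (t + 1) b
        rw [WProof.gE hk hE hα hβ0 t b hb1 hb2']
      · intro δ hδ
        simp only [Set.mem_setOf_eq] at hδ
        by_contra hlt
        push_neg at hlt
        have hgle := (WProof.L2 hk hE hα hβ0 hβ1 t b hb2' δ hlt.le).2 hb1
        have hneg : g k E α β δ (t + 1) b < 0 := by
          rcases le_or_gt 0 δ with h0 | h0
          · rw [max_eq_left h0] at hgle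
            nlinarith [mul_pos (sub_pos.2 hlt) (sub_pos.2 hβ1)]
          · rw [max_eq_right h0.le] at hgle
            nlinarith [mul_nonneg (sub_nonneg.2 hβ1.le) hE]
        linarith
    rw [whittle, hLeast.csInf_eq]
  · intro b hb3 hb4
    have hb : k * t + 1 ≤ b := by omega
    rw [hWhit b hb, WProof.Wf_succ]
    have h0 : b - k * (t + 1) = 0 := by omega
    rw [h0, Nat.add_sub_cancel]
    push_cast
    ring
  · intro b hb4
    have hb : k * t + 1 ≤ b := by omega
    rw [hWhit b hb, WProof.Wf_succ]
    have h0 : k * (t + 1) ≤ b := by omega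
    rw [Nat.cast_sub h0, Nat.add_sub_cancel]
    push_cast
    ring
end

section
/- Whittle index of comfortably finishable states (Theorem 2, second case): for every integer τ ≥ 1 and every integer b with 1 ≤ b ≤ (τ−1)·k + 1 (the task can be finished with at least one slot of slack), the Whittle index equals the per-slot energy saving: ω(τ,b) = E. -/
/-- geometric sum `E (1 + β + ⋯ + β^{t-1})` -/
noncomputable def Sg (E β : ℝ) : ℕ → ℝ
  | 0 => 0
  | t + 1 => E + β * Sg E β t

lemma F_nonneg {α : ℝ} (hα : 0 ≤ α) (x : ℕ) : 0 ≤ F α x := by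
  unfold F; positivity

lemma F_mono {α : ℝ} (hα : 0 ≤ α) {x y : ℕ} (h : x ≤ y) : F α x ≤ F α y := by
  unfold F
  have h1 : (x : ℝ) ≤ y := Nat.cast_le.2 h
  have h2 : (0 : ℝ) ≤ x := Nat.cast_nonneg x
  have h3 : (x : ℝ) ^ 2 ≤ (y : ℝ) ^ 2 := by nlinarith
  exact mul_le_mul_of_nonneg_left h3 hα

lemma Sg_nonneg {E β : ℝ} (hE : 0 ≤ E) (hβ : 0 ≤ β) : ∀ t, 0 ≤ Sg E β t
  | 0 => le_refl 0
  | t + 1 => by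
      have := Sg_nonneg hE hβ t
      simp only [Sg]
      nlinarith

/-- L1 : all values are bounded by the geometric sum, for δ ≤ E. -/
lemma V_le_Sg (k : ℕ) {E α β δ : ℝ} (hE : 0 ≤ E) (hα : 0 ≤ α) (hβ : 0 ≤ β)
    (hδ : δ ≤ E) : ∀ t b, V k E α β δ t b ≤ Sg E β t := by
  intro t
  induction t with
  | zero => intro b; simp [V, Sg]
  | succ t ih =>
    intro b
    match t with
    | 0 =>
      match b with
      | 0 =>
        simp only [V, Sg]
        have : β * 0 = 0 := by ring
        rw [this, add_zero]
        exact max_le hδ hE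
      | b + 1 =>
        simp only [V, Sg]
        have h1 := F_nonneg hα b
        have h2 := F_nonneg hα (b + 1 - k)
        have : β * 0 = 0 := by ring
        rw [this, add_zero]
        exact max_le (by linarith) (by linarith)
    | t + 1 =>
      rw [V]
      have h1 := ih (b - 1)
      have h2 := ih (b - k)
      show max _ _ ≤ Sg E β (t + 2)
      rw [show Sg E β (t+2) = E + β * Sg E β (t+1) from rfl]
      apply max_le
      · nlinarith
      · by_cases hb : 1 ≤ b <;> simp [hb] <;> nlinarith

/-- L2 : at δ = E, finishable states have value exactly the geometric sum. -/
lemma V_E_eq (k : ℕ) (hk : 1 ≤ k) {E α β : ℝ} (hE : 0 ≤ E) (hα : 0 ≤ α) (hβ : 0 ≤ β) :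
    ∀ t b, b ≤ t * k → V k E α β E t b = Sg E β t := by
  intro t
  induction t with
  | zero => intro b _; simp [V, Sg]
  | succ t ih =>
    intro b hb
    match t with
    | 0 =>
      match b with
      | 0 =>
        simp only [V, Sg]
        have : β * 0 = 0 := by ring
        rw [this, add_zero]
        exact max_eq_left hE
      | b + 1 =>
        have hbk : b + 1 - k = 0 := by
          have : b + 1 ≤ k := by simpa using hb
          omega
        simp only [V, Sg, hbk]
        have h0 : F α 0 = 0 := by simp [F]
        have h1 := F_nonneg hα b
        rw [h0]
        have : β * 0 = 0 := by ring
        rw [this, add_zero, sub_zero]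
        exact max_eq_right (by linarith)
    | t + 1 =>
      rw [V]
      show max _ _ = Sg E β (t + 2)
      rw [show Sg E β (t+2) = E + β * Sg E β (t+1) from rfl]
      match b with
      | 0 =>
        have h0 : (0 : ℕ) - 1 = 0 := rfl
        have hk0 : (0 : ℕ) - k = 0 := by omega
        rw [h0, hk0, ih 0 (Nat.zero_le _), if_neg (by omega)]
        rw [max_eq_left (by linarith)]
      | b + 1 =>
        have hmul : (t + 1 + 1) * k = (t + 1) * k + k := by ring
        have hup : b + 1 - k ≤ (t + 1) * k := by omega
        have hle : V k E α β E (t + 1) (b + 1 - 1) ≤ Sg E β (t + 1) :=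
          V_le_Sg k hE hα hβ le_rfl (t + 1) _
        rw [ih _ hup, if_pos (by omega)]
        rw [max_eq_right (by nlinarith)]

/-- M : monotonicity in the overloaded zone. -/
lemma V_mono_over (k : ℕ) (hk : 1 ≤ k) {E α β δ : ℝ} (hα : 0 ≤ α) (hβ : 0 ≤ β)
    (hδ : δ ≤ E) : ∀ s m m', s * k + 2 ≤ m → m ≤ m' →
      V k E α β δ (s + 1) m' ≤ V k E α β δ (s + 1) m := by
  intro s
  induction s with
  | zero =>
    intro m m' hm hmm
    obtain ⟨m₀, rfl⟩ : ∃ m₀, m = m₀ + 1 := ⟨m - 1, by omega⟩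
    obtain ⟨m₀', rfl⟩ : ∃ m₀', m' = m₀' + 1 := ⟨m' - 1, by omega⟩
    simp only [V]
    apply max_le_max
    · have := F_mono hα (show m₀ ≤ m₀' by omega)
      linarith
    · have := F_mono hα (show m₀ + 1 - k ≤ m₀' + 1 - k by omega)
      linarith
  | succ s ih =>
    intro m m' hm hmm
    have hmul : (s + 1) * k = s * k + k := by ring
    have hmk : s * k + 2 ≤ m - k := by omega
    have hm1 : s * k + 2 ≤ m - 1 := by omega
    have h1 := ih (m - 1) (m' - 1) hm1 (by omega)
    have h2 := ih (m - k) (m' - k) hmk (by omega)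
    rw [show s + 1 + 1 = s + 2 from rfl, V, V]
    rw [if_pos (show 1 ≤ m by omega), if_pos (show 1 ≤ m' by omega)]
    apply max_le_max
    · nlinarith
    · nlinarith

/-- Key : bounded increase over short finishable ranges. -/
lemma V_diff (k : ℕ) (hk : 1 ≤ k) {E α β δ : ℝ} (hE : 0 ≤ E) (hα : 0 ≤ α)
    (hβ0 : 0 ≤ β) (hβ1 : β ≤ 1) (hδ : δ ≤ E) :
    ∀ t b b', b ≤ b' → b' ≤ b + (k - 1) → b' ≤ t * k →
      V k E α β δ t b' ≤ V k E α β δ t b + (E - δ) := by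
  have hc : 0 ≤ E - δ := by linarith
  intro t
  induction t with
  | zero =>
    intro b b' h1 h2 h3
    have : b' = 0 := by omega
    have hb0 : b = 0 := by omega
    subst this; subst hb0
    simp [V]; linarith
  | succ t ih =>
    intro b b' h1 h2 h3
    match t with
    | 0 =>
      -- horizon 1, b' ≤ k
      have hb'k : b' ≤ k := by simpa using h3
      match b', h1 with
      | 0, h1 =>
        have : b = 0 := by omega
        subst this; simp [V]; linarith
      | b₀' + 1, h1 =>
        have hub : V k E α β δ 1 (b₀' + 1) ≤ E := by
          simp only [V]
          have hf1 := F_nonneg hα b₀'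
          have hf2 := F_nonneg hα (b₀' + 1 - k)
          exact max_le (by linarith) (by linarith)
        match b with
        | 0 =>
          have : max δ 0 + (E - δ) ≥ E := by
            have := le_max_left δ (0:ℝ)
            linarith
          simp only [V]
          refine le_trans hub ?_
          exact this
        | b₁ + 1 =>
          have hlb : E ≤ V k E α β δ 1 (b₁ + 1) := by
            have hbk : b₁ + 1 - k = 0 := by omega
            simp only [V, hbk]
            have h0 : F α 0 = 0 := by simp [F]
            rw [h0, sub_zero]
            exact le_max_right _ _
          linarith
    | t + 1 =>
      -- horizon t+2
      have hmul : (t + 1 + 1) * k = (t + 1) * k + k := by ring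
      have hkle : k ≤ (t + 1) * k := by
        calc k = 1 * k := (one_mul k).symm
          _ ≤ (t + 1) * k := Nat.mul_le_mul_right k (by omega)
      rcases Nat.eq_zero_or_pos b' with rfl | hb'1
      · have : b = 0 := by omega
        subst this
        linarith [le_refl (V k E α β δ (t + 1 + 1) 0)]
      · have hup : b' - k ≤ (t + 1) * k := by omega
        rw [show t + 1 + 1 = t + 2 from rfl, V]
        rw [if_pos (show 1 ≤ b' by omega)]
        rcases Nat.eq_zero_or_pos b with rfl | hb1
        · -- b = 0, so b' ≤ k - 1
          have hb'k : b' ≤ k - 1 := by omega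
          have hbk0 : b' - k = 0 := by omega
          have hVlow : V k E α β δ (t + 2) 0 =
              max δ 0 + β * V k E α β δ (t + 1) 0 := by
            rw [V, if_neg (by omega)]
            have h00 : (0:ℕ) - 1 = 0 := rfl
            have h0k : (0:ℕ) - k = 0 := by omega
            rw [h00, h0k]
            rcases le_or_gt δ 0 with h | h
            · rw [max_eq_right h, max_eq_right (by nlinarith), zero_add]
            · rw [max_eq_left h.le, max_eq_left (by nlinarith)]
          have hih : V k E α β δ (t + 1) (b' - 1) ≤
              V k E α β δ (t + 1) 0 + (E - δ) :=
            ih 0 (b' - 1) (by omega) (by omega) (by omega)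
          rw [hVlow, hbk0]
          apply max_le
          · have hm : δ ≤ max δ 0 := le_max_left _ _
            nlinarith
          · have hm : δ ≤ max δ 0 := le_max_left _ _
            linarith
        · -- b ≥ 1
          have hVb : V k E α β δ (t + 2) b =
              max (δ + β * V k E α β δ (t + 1) (b - 1))
                (E + β * V k E α β δ (t + 1) (b - k)) := by
            rw [V, if_pos (show 1 ≤ b by omega)]
          have hact : V k E α β δ (t + 1) (b' - k) ≤
              V k E α β δ (t + 1) (b - k) + (E - δ) :=
            ih (b - k) (b' - k) (by omega) (by omega) hup
          have hactle : E + β * V k E α β δ (t + 1) (b' - k) ≤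
              V k E α β δ (t + 2) b + (E - δ) := by
            rw [hVb]
            have := le_max_right (δ + β * V k E α β δ (t + 1) (b - 1))
              (E + β * V k E α β δ (t + 1) (b - k))
            nlinarith
          apply max_le _ hactle
          rcases le_or_gt (b' - 1) ((t + 1) * k) with hcase | hcase
          · have hpas : V k E α β δ (t + 1) (b' - 1) ≤
                V k E α β δ (t + 1) (b - 1) + (E - δ) :=
              ih (b - 1) (b' - 1) (by omega) (by omega) hcase
            rw [hVb]
            have := le_max_left (δ + β * V k E α β δ (t + 1) (b - 1))
              (E + β * V k E α β δ (t + 1) (b - k))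
            nlinarith
          · -- overloaded : b' - 1 > (t+1)k, use monotonicity
            have hmono : V k E α β δ (t + 1) (b' - 1) ≤
                V k E α β δ (t + 1) (b' - k) := by
              have hmul2 : (t + 1) * k = t * k + k := by ring
              exact V_mono_over k hk hα hβ0 hδ t (b' - k) (b' - 1)
                (by omega) (by omega)
            calc δ + β * V k E α β δ (t + 1) (b' - 1)
                ≤ E + β * V k E α β δ (t + 1) (b' - k) := by nlinarith
              _ ≤ V k E α β δ (t + 2) b + (E - δ) := hactle

theorem whittle_comfortable (k : ℕ) (hk : 1 ≤ k) (E α β : ℝ) (hE : 0 ≤ E) (hα : 0 < α)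
    (hβ0 : 0 < β) (hβ1 : β < 1)
    (τ b : ℕ) (hτ : 1 ≤ τ) (hb1 : 1 ≤ b) (hb2 : b ≤ (τ - 1) * k + 1) :
    whittle k E α β τ b = E := by
  have key : E ∈ {δ : ℝ | 0 ≤ g k E α β δ τ b} ∧
      ∀ x ∈ {δ : ℝ | 0 ≤ g k E α β δ τ b}, E ≤ x := by
    rcases Nat.lt_or_ge τ 2 with hτ2 | hτ2
    case inr =>
      obtain ⟨t, rfl⟩ : ∃ t, τ = t + 2 := ⟨τ - 2, by omega⟩
      have hb2' : b ≤ (t + 1) * k + 1 := by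
        have h : t + 2 - 1 = t + 1 := rfl
        rwa [h] at hb2
      have hgeq : ∀ δ : ℝ, g k E α β δ (t + 2) b =
          δ + β * V k E α β δ (t + 1) (b - 1) - E - β * V k E α β δ (t + 1) (b - k) := by
        intro δ
        rw [g, if_pos hb1]
      constructor
      · show (0:ℝ) ≤ g k E α β E (t + 2) b
        rw [hgeq]
        have h1 : V k E α β E (t + 1) (b - 1) = Sg E β (t + 1) :=
          V_E_eq k hk hE hα.le hβ0.le (t + 1) (b - 1) (by omega)
        have h2 : V k E α β E (t + 1) (b - k) = Sg E β (t + 1) :=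
          V_E_eq k hk hE hα.le hβ0.le (t + 1) (b - k) (by omega)
        rw [h1, h2]; ring_nf; exact le_refl 0
      · intro x hx
        by_contra hlt
        push_neg at hlt
        have hx0 : (0:ℝ) ≤ g k E α β x (t + 2) b := hx
        rw [hgeq] at hx0
        have hdiff : V k E α β x (t + 1) (b - 1) ≤
            V k E α β x (t + 1) (b - k) + (E - x) :=
          V_diff k hk hE hα.le hβ0.le hβ1.le hlt.le (t + 1) (b - k) (b - 1)
            (by omega) (by omega) (by omega)
        nlinarith
    case inl =>
      have hτ1 : τ = 1 := by omega
      subst hτ1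
      have hb' : b = 1 := by
        have h0 : (1 - 1) * k = 0 := by simp
        omega
      subst hb'
      have hgeq : ∀ δ : ℝ, g k E α β δ 1 1 = δ - E := by
        intro δ
        have h1k : 1 - k = 0 := by omega
        show δ - F α 0 - E + F α (0 + 1 - k) = δ - E
        rw [show (0:ℕ) + 1 - k = 0 by omega]
        simp [F]
      constructor
      · show (0:ℝ) ≤ g k E α β E 1 1
        rw [hgeq]; simp
      · intro x hx
        have : (0:ℝ) ≤ g k E α β x 1 1 := hx
        rw [hgeq] at this
        linarith
  exact le_antisymm (csInf_le ⟨E, key.2⟩ key.1) (le_csInf ⟨E, key.1⟩ key.2)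
end

section
/- Whittle index of unfinishable states (Theorem 2, fourth case): for every integer τ ≥ 1 and every integer b with b ≥ k·τ + 1 (the task cannot be finished even by offloading in every remaining slot), the Whittle index is ω(τ,b) = E + β^{τ−1}·α·( (b − k·τ + k − 1)² − (b − k·τ)² ). -/
set_option maxHeartbeats 2000000 in
lemma key_s10 (k : ℕ) (hk : 1 ≤ k) (E α β : ℝ) (hα : 0 < α) (hβ0 : 0 < β) (hβ1 : β < 1)
    (t : ℕ) (ht : 1 ≤ t) :
    ∀ y : ℕ, k * t + 1 ≤ y → ∀ δ : ℝ,
      δ ≤ E + β ^ (t - 1) * α * (((y : ℝ) - k * t + k - 1) ^ 2 - ((y : ℝ) - k * t) ^ 2) →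
      V k E α β δ t y =
        E * (∑ i ∈ Finset.range t, β ^ i) - β ^ (t - 1) * α * ((y : ℝ) - k * t) ^ 2 := by
  have hk1 : (1:ℝ) ≤ (k:ℝ) := by exact_mod_cast hk
  induction t, ht using Nat.le_induction with
  | base =>
    intro y hy δ hδ
    have hk1' : k * 1 = k := by ring
    obtain ⟨c, rfl⟩ : ∃ c, y = c + 1 := ⟨y - 1, by omega⟩
    have hkc : k ≤ c + 1 := by omega
    have hc : ((c + 1 - k : ℕ) : ℝ) = (c : ℝ) + 1 - k := by
      rw [Nat.cast_sub hkc]; push_cast; ring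
    simp only [V, F]
    norm_num at hδ ⊢
    rw [hc]
    rw [max_eq_right (by nlinarith [hδ])]
  | succ t' ht' ih =>
    obtain ⟨s, rfl⟩ : ∃ s, t' = s + 1 := ⟨t' - 1, by omega⟩
    intro y hy δ hδ
    have hmul : k * (s + 1 + 1) = k * s + k + k := by ring
    have hmul' : k * (s + 1) = k * s + k := by ring
    have h1y : 1 ≤ y := by omega
    have h1 : k * (s + 1) + 1 ≤ y - 1 := by omega
    have h2 : k * (s + 1) + 1 ≤ y - k := by omega
    have hc1 : ((y - 1 : ℕ) : ℝ) = (y : ℝ) - 1 := by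
      rw [Nat.cast_sub h1y]; push_cast; ring
    have hc2 : ((y - k : ℕ) : ℝ) = (y : ℝ) - k := by
      rw [Nat.cast_sub (by omega)]
    have hyR : (k : ℝ) * ((s:ℝ) + 1 + 1) + 1 ≤ (y : ℝ) := by exact_mod_cast hy
    have hβs : (0:ℝ) ≤ β ^ s := by positivity
    simp only [show s + 1 + 1 - 1 = s + 1 from rfl, show s + 1 - 1 = s from rfl] at hδ ih ⊢
    -- abbreviations
    set B : ℝ := (y : ℝ) - k * ((s + 1 + 1 : ℕ) : ℝ) with hB
    set A : ℝ := B + (k : ℝ) - 1 with hA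
    have hB1 : (1:ℝ) ≤ B := by rw [hB]; push_cast; linarith
    have hδ' : δ ≤ E + β ^ (s + 1) * α * (A ^ 2 - B ^ 2) := by
      calc δ ≤ _ := hδ
        _ = E + β ^ (s + 1) * α * (A ^ 2 - B ^ 2) := by
          first
          | rfl
          | (rw [hA, hB]; push_cast; ring)
    have hd : (0:ℝ) ≤ (k:ℝ) - 1 := by linarith
    have hu : (0:ℝ) ≤ A + B := by rw [hA]; linarith
    have eL : A ^ 2 - B ^ 2 = ((k:ℝ) - 1) * (A + B) := by rw [hA]; ring
    have hAB : (0:ℝ) ≤ A ^ 2 - B ^ 2 := by rw [eL]; exact mul_nonneg hd hu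
    have hca : (0:ℝ) ≤ β ^ s * α := mul_nonneg hβs hα.le
    have hδ1 : δ ≤ E + β ^ s * α *
        ((((y - 1 : ℕ) : ℝ) - k * ((s + 1 : ℕ) : ℝ) + k - 1) ^ 2 - (((y - 1 : ℕ) : ℝ) - k * ((s + 1 : ℕ) : ℝ)) ^ 2) := by
      have e1 : ((y - 1 : ℕ) : ℝ) - k * ((s + 1 : ℕ) : ℝ) = A := by rw [hc1, hA, hB]; push_cast; ring
      rw [e1]
      have eR : (A + (k:ℝ) - 1) ^ 2 - A ^ 2 = ((k:ℝ) - 1) * (A + B) + 2 * ((k:ℝ) - 1) ^ 2 := by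
        rw [hA]; ring
      have key1 : β * (A ^ 2 - B ^ 2) ≤ (A + (k:ℝ) - 1) ^ 2 - A ^ 2 := by
        rw [eL, eR]
        have h1' : (1 - β) * (((k:ℝ) - 1) * (A + B)) ≥ 0 :=
          mul_nonneg (by linarith) (mul_nonneg hd hu)
        nlinarith [sq_nonneg ((k:ℝ) - 1)]
      have hmm := mul_le_mul_of_nonneg_left key1 hca
      calc δ ≤ E + β ^ (s + 1) * α * (A ^ 2 - B ^ 2) := hδ'
        _ = E + β ^ s * α * (β * (A ^ 2 - B ^ 2)) := by ring
        _ ≤ E + β ^ s * α * ((A + (k:ℝ) - 1) ^ 2 - A ^ 2) := by linarith [hmm]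
    have hδ2 : δ ≤ E + β ^ s * α *
        ((((y - k : ℕ) : ℝ) - k * ((s + 1 : ℕ) : ℝ) + k - 1) ^ 2 - (((y - k : ℕ) : ℝ) - k * ((s + 1 : ℕ) : ℝ)) ^ 2) := by
      have e2 : ((y - k : ℕ) : ℝ) - k * ((s + 1 : ℕ) : ℝ) = B := by rw [hc2, hB]; push_cast; ring
      rw [e2, show B + (k:ℝ) - 1 = A from by rw [hA]]
      have key2 : β * (A ^ 2 - B ^ 2) ≤ A ^ 2 - B ^ 2 := by nlinarith [hAB]
      have hmm := mul_le_mul_of_nonneg_left key2 hca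
      calc δ ≤ E + β ^ (s + 1) * α * (A ^ 2 - B ^ 2) := hδ'
        _ = E + β ^ s * α * (β * (A ^ 2 - B ^ 2)) := by ring
        _ ≤ E + β ^ s * α * (A ^ 2 - B ^ 2) := by linarith [hmm]
    rw [show s + 1 + 1 = s + 2 from rfl]
    simp only [V]
    rw [if_pos h1y, ih (y - 1) h1 δ hδ1, ih (y - k) h2 δ hδ2]
    have e1 : ((y - 1 : ℕ) : ℝ) - k * ((s + 1 : ℕ) : ℝ) = A := by rw [hc1, hA, hB]; push_cast; ring
    have e2 : ((y - k : ℕ) : ℝ) - k * ((s + 1 : ℕ) : ℝ) = B := by rw [hc2, hB]; push_cast; ring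
    rw [e1, e2]
    have hle : δ + β * (E * (∑ i ∈ Finset.range (s+1), β ^ i) - β ^ s * α * A ^ 2)
        ≤ E + β * (E * (∑ i ∈ Finset.range (s+1), β ^ i) - β ^ s * α * B ^ 2) := by
      have expand : E + β * (E * (∑ i ∈ Finset.range (s+1), β ^ i) - β ^ s * α * B ^ 2)
          - (δ + β * (E * (∑ i ∈ Finset.range (s+1), β ^ i) - β ^ s * α * A ^ 2))
          = (E + β ^ (s + 1) * α * (A ^ 2 - B ^ 2)) - δ := by ring
      linarith [hδ', expand]
    rw [max_eq_right hle]
    have hsum : (∑ i ∈ Finset.range (s + 2), β ^ i)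
        = β * (∑ i ∈ Finset.range (s + 1), β ^ i) + 1 := geom_sum_succ
    rw [hsum]
    ring

set_option maxHeartbeats 2000000 in
theorem whittle_unfinishable (k : ℕ) (hk : 1 ≤ k) (E α β : ℝ) (hE : 0 ≤ E) (hα : 0 < α)
    (hβ0 : 0 < β) (hβ1 : β < 1)
    (τ b : ℕ) (hτ : 1 ≤ τ) (hb : k * τ + 1 ≤ b) :
    whittle k E α β τ b = E + β ^ (τ - 1) * α * (((b : ℝ) - k * τ + k - 1) ^ 2 - ((b : ℝ) - k * τ) ^ 2) := by
  have hk1 : (1:ℝ) ≤ (k:ℝ) := by exact_mod_cast hk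
  set W : ℝ := E + β ^ (τ - 1) * α * (((b : ℝ) - k * τ + k - 1) ^ 2 - ((b : ℝ) - k * τ) ^ 2) with hWdef
  have hg : ∀ δ : ℝ, δ ≤ W → g k E α β δ τ b = δ - W := by
    intro δ hδ
    rw [hWdef] at hδ ⊢
    obtain ⟨t, rfl⟩ : ∃ t, τ = t + 1 := ⟨τ - 1, by omega⟩
    cases t with
    | zero =>
      have hkk : k * 1 = k := by ring
      obtain ⟨c, rfl⟩ : ∃ c, b = c + 1 := ⟨b - 1, by omega⟩
      have hkc : k ≤ c + 1 := by omega
      have hc : ((c + 1 - k : ℕ) : ℝ) = (c : ℝ) + 1 - k := by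
        rw [Nat.cast_sub hkc]; push_cast; ring
      simp only [g, F]
      rw [hc]
      norm_num
      push_cast
      ring
    | succ s =>
      have hmul : k * (s + 1 + 1) = k * s + k + k := by ring
      have hmul' : k * (s + 1) = k * s + k := by ring
      have h1b : 1 ≤ b := by omega
      have h1 : k * (s + 1) + 1 ≤ b - 1 := by omega
      have h2 : k * (s + 1) + 1 ≤ b - k := by omega
      have hc1 : ((b - 1 : ℕ) : ℝ) = (b : ℝ) - 1 := by
        rw [Nat.cast_sub h1b]; push_cast; ring
      have hc2 : ((b - k : ℕ) : ℝ) = (b : ℝ) - k := by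
        rw [Nat.cast_sub (by omega)]
      have hbR : (k : ℝ) * ((s:ℝ) + 1 + 1) + 1 ≤ (b : ℝ) := by exact_mod_cast hb
      have hβs : (0:ℝ) ≤ β ^ s := by positivity
      simp only [show s + 1 + 1 - 1 = s + 1 from rfl] at hδ ⊢
      set B : ℝ := (b : ℝ) - k * ((s + 1 + 1 : ℕ) : ℝ) with hB
      set A : ℝ := B + (k : ℝ) - 1 with hA
      have hB1 : (1:ℝ) ≤ B := by rw [hB]; push_cast; linarith
      have hd : (0:ℝ) ≤ (k:ℝ) - 1 := by linarith
      have hu : (0:ℝ) ≤ A + B := by rw [hA]; linarith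
      have eL : A ^ 2 - B ^ 2 = ((k:ℝ) - 1) * (A + B) := by rw [hA]; ring
      have hAB : (0:ℝ) ≤ A ^ 2 - B ^ 2 := by rw [eL]; exact mul_nonneg hd hu
      have hca : (0:ℝ) ≤ β ^ s * α := mul_nonneg hβs hα.le
      have hδ' : δ ≤ E + β ^ (s + 1) * α * (A ^ 2 - B ^ 2) := hδ
      have hδ1 : δ ≤ E + β ^ s * α *
          ((((b - 1 : ℕ) : ℝ) - k * ((s + 1 : ℕ) : ℝ) + k - 1) ^ 2
            - (((b - 1 : ℕ) : ℝ) - k * ((s + 1 : ℕ) : ℝ)) ^ 2) := by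
        have e1 : ((b - 1 : ℕ) : ℝ) - k * ((s + 1 : ℕ) : ℝ) = A := by
          rw [hc1, hA, hB]; push_cast; ring
        rw [e1]
        have eR : (A + (k:ℝ) - 1) ^ 2 - A ^ 2 = ((k:ℝ) - 1) * (A + B) + 2 * ((k:ℝ) - 1) ^ 2 := by
          rw [hA]; ring
        have key1 : β * (A ^ 2 - B ^ 2) ≤ (A + (k:ℝ) - 1) ^ 2 - A ^ 2 := by
          rw [eL, eR]
          have h1' : (1 - β) * (((k:ℝ) - 1) * (A + B)) ≥ 0 :=
            mul_nonneg (by linarith) (mul_nonneg hd hu)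
          nlinarith [sq_nonneg ((k:ℝ) - 1)]
        have hmm := mul_le_mul_of_nonneg_left key1 hca
        calc δ ≤ E + β ^ (s + 1) * α * (A ^ 2 - B ^ 2) := hδ'
          _ = E + β ^ s * α * (β * (A ^ 2 - B ^ 2)) := by ring
          _ ≤ E + β ^ s * α * ((A + (k:ℝ) - 1) ^ 2 - A ^ 2) := by linarith [hmm]
      have hδ2 : δ ≤ E + β ^ s * α *
          ((((b - k : ℕ) : ℝ) - k * ((s + 1 : ℕ) : ℝ) + k - 1) ^ 2
            - (((b - k : ℕ) : ℝ) - k * ((s + 1 : ℕ) : ℝ)) ^ 2) := by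
        have e2 : ((b - k : ℕ) : ℝ) - k * ((s + 1 : ℕ) : ℝ) = B := by
          rw [hc2, hB]; push_cast; ring
        rw [e2, show B + (k:ℝ) - 1 = A from by rw [hA]]
        have key2 : β * (A ^ 2 - B ^ 2) ≤ A ^ 2 - B ^ 2 := by nlinarith [hAB]
        have hmm := mul_le_mul_of_nonneg_left key2 hca
        calc δ ≤ E + β ^ (s + 1) * α * (A ^ 2 - B ^ 2) := hδ'
          _ = E + β ^ s * α * (β * (A ^ 2 - B ^ 2)) := by ring
          _ ≤ E + β ^ s * α * (A ^ 2 - B ^ 2) := by linarith [hmm]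
      rw [show s + 1 + 1 = s + 2 from rfl]
      simp only [g]
      rw [if_pos h1b,
        key_s10 k hk E α β hα hβ0 hβ1 (s + 1) (by omega) (b - 1) h1 δ hδ1,
        key_s10 k hk E α β hα hβ0 hβ1 (s + 1) (by omega) (b - k) h2 δ hδ2]
      have e1 : ((b - 1 : ℕ) : ℝ) - k * ((s + 1 : ℕ) : ℝ) = A := by
        rw [hc1, hA, hB]; push_cast; ring
      have e2 : ((b - k : ℕ) : ℝ) - k * ((s + 1 : ℕ) : ℝ) = B := by
        rw [hc2, hB]; push_cast; ring
      simp only [show (s + 1 : ℕ) - 1 = s from rfl]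
      rw [e1, e2, hA]
      ring
  have hmem : (0:ℝ) ≤ g k E α β W τ b := by rw [hg W le_rfl]; simp
  have hlb : ∀ x ∈ {δ : ℝ | 0 ≤ g k E α β δ τ b}, W ≤ x := by
    intro x hx
    by_contra h
    push_neg at h
    have := hg x h.le
    simp only [Set.mem_setOf_eq] at hx
    rw [this] at hx
    linarith
  rw [hWdef] at hmem hlb ⊢
  exact le_antisymm (csInf_le ⟨_, hlb⟩ hmem) (le_csInf ⟨_, hmem⟩ hlb)
end

section
/- Case τ = 2 of the Whittle index (Appendix B): ω(2,0) = 0; ω(2,b) = E for every integer b with 1 ≤ b ≤ k + 1; ω(2,b) = E + β·α·(b − k − 1)² for every integer b with k + 2 ≤ b ≤ 2k; and ω(2,b) = E + β·α·( (b − k − 1)² − (b − 2k)² ) for every integer b ≥ 2k + 1. -/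
lemma g_two (k : ℕ) (E α β δ : ℝ) (b : ℕ) :
    g k E α β δ 2 b = δ + β * V k E α β δ 1 (b - 1) - (if 1 ≤ b then E else 0)
        - β * V k E α β δ 1 (b - k) := by
  show g k E α β δ (0 + 2) b = _
  rw [g]

lemma V1_eval (k : ℕ) (E α β δ : ℝ) (x : ℕ) (hx : 1 ≤ x) :
    V k E α β δ 1 x = max (δ - α * ((x : ℝ) - 1) ^ 2) (E - α * (((x - k : ℕ)) : ℝ) ^ 2) := by
  obtain ⟨s, rfl⟩ : ∃ s, x = s + 1 := ⟨x - 1, by omega⟩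
  rw [V]
  unfold F
  push_cast
  ring_nf

lemma V1_mono_s12 (k : ℕ) (E α β : ℝ) {δ δ' : ℝ} (h : δ ≤ δ') (x : ℕ) :
    V k E α β δ 1 x ≤ V k E α β δ' 1 x ∧
      V k E α β δ' 1 x ≤ V k E α β δ 1 x + (δ' - δ) := by
  match x with
  | 0 =>
    rw [V, V]
    constructor
    · exact max_le_max h le_rfl
    · have h1 := le_max_left δ (0 : ℝ)
      have h2 := le_max_right δ (0 : ℝ)
      exact max_le (by linarith) (by linarith)
  | s + 1 =>
    rw [V, V]
    constructor
    · exact max_le_max (by linarith) le_rfl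
    · have h1 := le_max_left (δ - F α s) (E - F α (s + 1 - k))
      have h2 := le_max_right (δ - F α s) (E - F α (s + 1 - k))
      exact max_le (by linarith) (by linarith)

lemma g2_lip (k : ℕ) (E α β : ℝ) (hβ0 : 0 < β) {δ δ' : ℝ} (h : δ ≤ δ') (b : ℕ) :
    g k E α β δ 2 b + (1 - β) * (δ' - δ) ≤ g k E α β δ' 2 b := by
  rw [g_two, g_two]
  obtain ⟨h1, h2⟩ := V1_mono_s12 k E α β h (b - 1)
  obtain ⟨h3, h4⟩ := V1_mono_s12 k E α β h (b - k)
  have hb1 : β * V k E α β δ 1 (b - 1) ≤ β * V k E α β δ' 1 (b - 1) :=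
    mul_le_mul_of_nonneg_left h1 hβ0.le
  have hb4 : β * V k E α β δ' 1 (b - k) ≤
      β * (V k E α β δ 1 (b - k) + (δ' - δ)) :=
    mul_le_mul_of_nonneg_left h4 hβ0.le
  have : β * (V k E α β δ 1 (b - k) + (δ' - δ))
      = β * V k E α β δ 1 (b - k) + β * (δ' - δ) := by ring
  rw [this] at hb4
  linarith

lemma whittle_eq_of_root (k : ℕ) (E α β ω : ℝ) (hβ0 : 0 < β) (hβ1 : β < 1) (b : ℕ)
    (hroot : g k E α β ω 2 b = 0) : whittle k E α β 2 b = ω := by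
  unfold whittle
  have hset : {δ : ℝ | 0 ≤ g k E α β δ 2 b} = Set.Ici ω := by
    ext δ
    simp only [Set.mem_setOf_eq, Set.mem_Ici]
    constructor
    · intro hδ
      by_contra hlt
      push_neg at hlt
      have := g2_lip k E α β hβ0 (le_of_lt hlt) b
      rw [hroot] at this
      nlinarith
    · intro hδ
      have := g2_lip k E α β hβ0 hδ b
      rw [hroot] at this
      nlinarith
  rw [hset, csInf_Ici]

lemma V1_at_E (k : ℕ) (E α β : ℝ) (hE : 0 ≤ E) (hα : 0 < α) {x : ℕ} (hx : x ≤ k) :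
    V k E α β E 1 x = E := by
  match x with
  | 0 => rw [V]; exact max_eq_left hE
  | s + 1 =>
    rw [V]
    have h0 : s + 1 - k = 0 := by omega
    rw [h0]
    have : F α 0 = 0 := by simp [F]
    rw [this]
    have : F α s ≥ 0 := by
      unfold F; positivity
    rw [sub_zero]
    exact max_eq_right (by linarith)

set_option maxHeartbeats 1000000 in
theorem whittle_tau_two (k : ℕ) (hk : 1 ≤ k) (E α β : ℝ) (hE : 0 ≤ E) (hα : 0 < α)
    (hβ0 : 0 < β) (hβ1 : β < 1) :
    whittle k E α β 2 0 = 0 ∧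
    (∀ b : ℕ, 1 ≤ b → b ≤ k + 1 → whittle k E α β 2 b = E) ∧
    (∀ b : ℕ, k + 2 ≤ b → b ≤ 2 * k →
      whittle k E α β 2 b = E + β * α * ((b : ℝ) - k - 1) ^ 2) ∧
    (∀ b : ℕ, 2 * k + 1 ≤ b →
      whittle k E α β 2 b = E + β * α * (((b : ℝ) - k - 1) ^ 2 - ((b : ℝ) - 2 * k) ^ 2)) := by
  refine ⟨?_, ?_, ?_, ?_⟩
  · -- b = 0
    apply whittle_eq_of_root k E α β 0 hβ0 hβ1 0
    rw [g_two]
    simp [Nat.zero_sub]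
  · -- 1 ≤ b ≤ k + 1
    intro b hb1 hb2
    apply whittle_eq_of_root k E α β E hβ0 hβ1 b
    rw [g_two]
    rw [V1_at_E k E α β hE hα (show b - 1 ≤ k by omega),
        V1_at_E k E α β hE hα (show b - k ≤ k by omega)]
    rw [if_pos hb1]
    ring
  · -- k + 2 ≤ b ≤ 2k
    intro b hb1 hb2
    set y : ℝ := (b : ℝ) with hy
    have hky : (k : ℝ) + 2 ≤ y := by
      rw [hy]; exact_mod_cast hb1
    have hy2k : y ≤ 2 * (k : ℝ) := by
      rw [hy]; exact_mod_cast hb2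
    have hk1 : (1 : ℝ) ≤ (k : ℝ) := by exact_mod_cast hk
    set ω : ℝ := E + β * α * (y - k - 1) ^ 2 with hω
    apply whittle_eq_of_root k E α β ω hβ0 hβ1 b
    rw [g_two]
    -- V at b - k
    have hVbk : V k E α β ω 1 (b - k) = E := by
      rw [V1_eval k E α β ω (b - k) (by omega)]
      have e1 : ((b - k : ℕ) : ℝ) = y - k := by
        rw [Nat.cast_sub (by omega)]
      have e2 : (b - k - k : ℕ) = 0 := by omega
      rw [e1, e2]
      push_cast
      have : E - α * (0 : ℝ) ^ 2 = E := by ring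
      rw [this]
      apply max_eq_right
      rw [hω]
      have hx2 : (0 : ℝ) ≤ α * (y - k - 1) ^ 2 := by positivity
      have hb : β * (α * (y - k - 1) ^ 2) ≤ 1 * (α * (y - k - 1) ^ 2) :=
        mul_le_mul_of_nonneg_right (by linarith) hx2
      linarith
    -- V at b - 1
    have hVb1 : V k E α β ω 1 (b - 1) = E - α * (y - k - 1) ^ 2 := by
      rw [V1_eval k E α β ω (b - 1) (by omega)]
      have e1 : ((b - 1 : ℕ) : ℝ) = y - 1 := by
        rw [Nat.cast_sub (by omega)]; push_cast; ring
      have e2 : ((b - 1 - k : ℕ) : ℝ) = y - k - 1 := by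
        rw [Nat.cast_sub (by omega), Nat.cast_sub (by omega)]; push_cast; ring
      rw [e1, e2]
      apply max_eq_right
      -- need ω - α (y-2)^2 ≤ E - α (y-k-1)^2, i.e. (1+β)(y-k-1)^2 ≤ (y-2)^2
      have h1 : 2 * (y - k - 1) ≤ y - 2 := by linarith
      have h2 : (1 : ℝ) ≤ y - k - 1 := by linarith
      have hsq : 4 * (y - k - 1) ^ 2 ≤ (y - 2) ^ 2 := by nlinarith
      have : y - 1 - 1 = y - 2 := by ring
      rw [this, hω]
      have hx2 : (0 : ℝ) ≤ α * (y - k - 1) ^ 2 := by positivity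
      have hb : β * (α * (y - k - 1) ^ 2) ≤ 1 * (α * (y - k - 1) ^ 2) :=
        mul_le_mul_of_nonneg_right (by linarith) hx2
      have h4a : α * (4 * (y - k - 1) ^ 2) ≤ α * (y - 2) ^ 2 :=
        mul_le_mul_of_nonneg_left hsq hα.le
      linarith
    rw [hVbk, hVb1, if_pos (by omega : 1 ≤ b)]
    rw [hω]
    ring
  · -- b ≥ 2k + 1
    intro b hb1
    set y : ℝ := (b : ℝ) with hy
    have hky : 2 * (k : ℝ) + 1 ≤ y := by
      rw [hy]; exact_mod_cast hb1
    have hk1 : (1 : ℝ) ≤ (k : ℝ) := by exact_mod_cast hk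
    set ω : ℝ := E + β * α * ((y - k - 1) ^ 2 - (y - 2 * k) ^ 2) with hω
    apply whittle_eq_of_root k E α β ω hβ0 hβ1 b
    rw [g_two]
    have hVbk : V k E α β ω 1 (b - k) = E - α * (y - 2 * k) ^ 2 := by
      rw [V1_eval k E α β ω (b - k) (by omega)]
      have e1 : ((b - k : ℕ) : ℝ) = y - k := by
        rw [Nat.cast_sub (by omega)]
      have e2 : ((b - k - k : ℕ) : ℝ) = y - 2 * k := by
        rw [Nat.cast_sub (by omega), Nat.cast_sub (by omega)]; push_cast; ring
      rw [e1, e2]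
      apply max_eq_right
      rw [hω]
      -- ω - α(y-k-1)^2 ≤ E - α(y-2k)^2
      have h1 : (1 : ℝ) ≤ y - 2 * k := by linarith
      have h2 : y - 2 * k ≤ y - k - 1 := by linarith
      have hsq : (y - 2 * k) ^ 2 ≤ (y - k - 1) ^ 2 :=
        pow_le_pow_left₀ (by linarith) h2 2
      have hB : (0 : ℝ) ≤ α * ((y - k - 1) ^ 2 - (y - 2 * k) ^ 2) :=
        mul_nonneg hα.le (by linarith)
      have hC : β * (α * ((y - k - 1) ^ 2 - (y - 2 * k) ^ 2))
          ≤ 1 * (α * ((y - k - 1) ^ 2 - (y - 2 * k) ^ 2)) :=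
        mul_le_mul_of_nonneg_right (by linarith) hB
      linarith
    have hVb1 : V k E α β ω 1 (b - 1) = E - α * (y - k - 1) ^ 2 := by
      rw [V1_eval k E α β ω (b - 1) (by omega)]
      have e1 : ((b - 1 : ℕ) : ℝ) = y - 1 := by
        rw [Nat.cast_sub (by omega)]; push_cast; ring
      have e2 : ((b - 1 - k : ℕ) : ℝ) = y - k - 1 := by
        rw [Nat.cast_sub (by omega), Nat.cast_sub (by omega)]; push_cast; ring
      rw [e1, e2]
      apply max_eq_right
      rw [hω]
      -- ω - α(y-2)^2 ≤ E - α(y-k-1)^2, i.e. β((y-k-1)^2 - (y-2k)^2) ≤ (y-2)^2 - (y-k-1)^2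
      have h1 : (k : ℝ) ≤ y - k - 1 := by linarith
      have h2 : y - 2 * k = (y - k - 1) - ((k : ℝ) - 1) := by ring
      have h3 : y - 1 - 1 = (y - k - 1) + ((k : ℝ) - 1) := by ring
      have hd1 : (y - k - 1) ^ 2 - (y - 2 * k) ^ 2
          = ((k : ℝ) - 1) * (2 * (y - k - 1) - ((k : ℝ) - 1)) := by rw [h2]; ring
      have hd2 : (y - 1 - 1) ^ 2 - (y - k - 1) ^ 2
          = ((k : ℝ) - 1) * (2 * (y - k - 1) + ((k : ℝ) - 1)) := by rw [h3]; ring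
      have hq : (y - k - 1) ^ 2 - (y - 2 * k) ^ 2 ≤ (y - 1 - 1) ^ 2 - (y - k - 1) ^ 2 := by
        rw [hd1, hd2]
        have : (0 : ℝ) ≤ (k : ℝ) - 1 := by linarith
        nlinarith
      have hnn : (0 : ℝ) ≤ (y - k - 1) ^ 2 - (y - 2 * k) ^ 2 := by
        rw [hd1]
        have h4 : (0 : ℝ) ≤ (k : ℝ) - 1 := by linarith
        have h5 : (0 : ℝ) ≤ 2 * (y - k - 1) - ((k : ℝ) - 1) := by linarith
        positivity
      have hA : α * ((y - k - 1) ^ 2 - (y - 2 * k) ^ 2)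
          ≤ α * ((y - 1 - 1) ^ 2 - (y - k - 1) ^ 2) :=
        mul_le_mul_of_nonneg_left hq hα.le
      have hB : (0 : ℝ) ≤ α * ((y - k - 1) ^ 2 - (y - 2 * k) ^ 2) :=
        mul_nonneg hα.le hnn
      have hC : β * (α * ((y - k - 1) ^ 2 - (y - 2 * k) ^ 2))
          ≤ 1 * (α * ((y - k - 1) ^ 2 - (y - 2 * k) ^ 2)) :=
        mul_le_mul_of_nonneg_right (by linarith) hB
      linarith
    rw [hVbk, hVb1, if_pos (by omega : 1 ≤ b)]
    rw [hω]
    ring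
end

section
/- Indifference at the Whittle index: for every integer τ ≥ 1 and every integer b ≥ 0, when the subsidy equals the Whittle index ω(τ,b), the passive and active actions yield exactly the same value, i.e. g_{ω(τ,b)}(τ,b) = 0. -/
private lemma abs_max_max {a b c d M : ℝ} (h1 : |a - c| ≤ M) (h2 : |b - d| ≤ M) :
    |max a b - max c d| ≤ M :=
  le_trans (abs_max_sub_max_le_max a b c d) (max_le h1 h2)

private lemma Fnonneg {α : ℝ} (hα : 0 ≤ α) (m : ℕ) : 0 ≤ F α m := by
  unfold F; positivity

private lemma Fle {α : ℝ} (hα : 0 ≤ α) {m N : ℕ} (h : m ≤ N) :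
    F α m ≤ α * (N : ℝ) ^ 2 := by
  unfold F
  have hm : (m : ℝ) ≤ (N : ℝ) := by exact_mod_cast h
  have h2 : (m : ℝ) ^ 2 ≤ (N : ℝ) ^ 2 := by nlinarith [Nat.cast_nonneg (α := ℝ) m]
  nlinarith

lemma Vlip (k : ℕ) (E α β : ℝ) (hβ0 : 0 ≤ β) (hβ1 : β ≤ 1) :
    ∀ τ b : ℕ, ∀ δ δ' : ℝ,
      |V k E α β δ τ b - V k E α β δ' τ b| ≤ (τ : ℝ) * |δ - δ'| := by
  intro τ
  induction τ using Nat.strong_induction_on with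
  | _ τ ih =>
  match τ with
  | 0 => intro b δ δ'; simp [V]
  | 1 =>
    intro b δ δ'
    have h0 : (0:ℝ) ≤ |δ - δ'| := abs_nonneg _
    match b with
    | 0 =>
      simp only [V, Nat.cast_one, one_mul]
      exact abs_max_max (le_refl _) (by simpa using h0)
    | b+1 =>
      simp only [V, Nat.cast_one, one_mul]
      refine abs_max_max ?_ (by simpa using h0)
      have h : δ - F α b - (δ' - F α b) = δ - δ' := by ring
      rw [h]
  | n+2 =>
    intro b δ δ'
    have hn1 := ih (n+1) (by omega) (b-1) δ δ'
    have hn2 := ih (n+1) (by omega) (b-k) δ δ'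
    have h0 : (0:ℝ) ≤ |δ - δ'| := abs_nonneg _
    simp only [V]
    apply abs_max_max
    · have h : δ + β * V k E α β δ (n+1) (b-1) - (δ' + β * V k E α β δ' (n+1) (b-1))
          = (δ - δ') + β * (V k E α β δ (n+1) (b-1) - V k E α β δ' (n+1) (b-1)) := by ring
      rw [h]
      have h2 : |(δ - δ') + β * (V k E α β δ (n+1) (b-1) - V k E α β δ' (n+1) (b-1))|
          ≤ |δ - δ'| + β * |V k E α β δ (n+1) (b-1) - V k E α β δ' (n+1) (b-1)| := by
        calc _ ≤ |δ - δ'| + |β * (V k E α β δ (n+1) (b-1) - V k E α β δ' (n+1) (b-1))| :=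
              abs_add_le _ _
        _ = _ := by rw [abs_mul, abs_of_nonneg hβ0]
      have h3 : β * |V k E α β δ (n+1) (b-1) - V k E α β δ' (n+1) (b-1)|
          ≤ β * ((n+1 : ℝ) * |δ - δ'|) := by
        apply mul_le_mul_of_nonneg_left _ hβ0
        exact_mod_cast hn1
      push_cast
      nlinarith [mul_nonneg (Nat.cast_nonneg n : (0:ℝ) ≤ n) h0]
    · have h : (if 1 ≤ b then E else 0) + β * V k E α β δ (n+1) (b-k)
          - ((if 1 ≤ b then E else 0) + β * V k E α β δ' (n+1) (b-k))
          = β * (V k E α β δ (n+1) (b-k) - V k E α β δ' (n+1) (b-k)) := by ring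
      rw [h, abs_mul, abs_of_nonneg hβ0]
      have h3 : β * |V k E α β δ (n+1) (b-k) - V k E α β δ' (n+1) (b-k)|
          ≤ β * ((n+1 : ℝ) * |δ - δ'|) := by
        apply mul_le_mul_of_nonneg_left _ hβ0
        exact_mod_cast hn2
      push_cast
      nlinarith [mul_nonneg (Nat.cast_nonneg n : (0:ℝ) ≤ n) h0]

lemma Vdiff (k : ℕ) (E α β : ℝ) (hE : 0 ≤ E) (hα : 0 ≤ α) (hβ0 : 0 ≤ β) (hβ1 : β ≤ 1)
    (N : ℕ) :
    ∀ τ b₁ b₂ : ℕ, b₁ ≤ N → b₂ ≤ N → ∀ δ : ℝ,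
      |V k E α β δ τ b₁ - V k E α β δ τ b₂| ≤ (τ : ℝ) * (E + α * (N : ℝ) ^ 2) := by
  have hC : (0:ℝ) ≤ E + α * (N:ℝ)^2 := by positivity
  have hA : (0:ℝ) ≤ α * (N:ℝ)^2 := by positivity
  intro τ
  induction τ using Nat.strong_induction_on with
  | _ τ ih =>
  match τ with
  | 0 => intro b₁ b₂ _ _ δ; simpa [V] using hC.trans (by linarith)
  | 1 =>
    intro b₁ b₂ h₁ h₂ δ
    have key : ∀ m : ℕ, m + 1 ≤ N → ∀ δ : ℝ,
        |V k E α β δ 1 0 - V k E α β δ 1 (m+1)| ≤ E + α * (N:ℝ)^2 := by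
      intro m hm δ
      simp only [V]
      apply abs_max_max
      · have h : δ - (δ - F α m) = F α m := by ring
        rw [h, abs_of_nonneg (Fnonneg hα m)]
        have := Fle hα (show m ≤ N by omega)
        linarith
      · have h1 := Fnonneg hα (m+1-k)
        have h2 := Fle hα (show m+1-k ≤ N from (Nat.sub_le _ _).trans hm)
        rw [abs_le]
        constructor <;> simp <;> linarith
    match b₁, b₂ with
    | 0, 0 => simp only [V, sub_self, abs_zero, Nat.cast_one, one_mul]; exact hC
    | 0, m+1 =>
      simpa using key m h₂ δ
    | m+1, 0 =>
      rw [abs_sub_comm]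
      simpa using key m h₁ δ
    | m₁+1, m₂+1 =>
      simp only [V, Nat.cast_one, one_mul]
      have f1 := Fnonneg hα m₁
      have f2 := Fnonneg hα m₂
      have f3 := Fnonneg hα (m₁+1-k)
      have f4 := Fnonneg hα (m₂+1-k)
      have g1 := Fle hα (show m₁ ≤ N by omega)
      have g2 := Fle hα (show m₂ ≤ N by omega)
      have g3 := Fle hα (show m₁+1-k ≤ N from (Nat.sub_le _ _).trans h₁)
      have g4 := Fle hα (show m₂+1-k ≤ N from (Nat.sub_le _ _).trans h₂)
      apply abs_max_max <;> rw [abs_le] <;> constructor <;> push_cast <;> linarith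
  | n+2 =>
    intro b₁ b₂ h₁ h₂ δ
    have hC1 : (0:ℝ) ≤ ((n:ℝ)+1) * (E + α * (N:ℝ)^2) := by positivity
    have ih1 := ih (n+1) (by omega) (b₁-1) (b₂-1)
      ((Nat.sub_le _ _).trans h₁) ((Nat.sub_le _ _).trans h₂) δ
    have ih2 := ih (n+1) (by omega) (b₁-k) (b₂-k)
      ((Nat.sub_le _ _).trans h₁) ((Nat.sub_le _ _).trans h₂) δ
    push_cast at ih1 ih2 ⊢
    simp only [V]
    apply abs_max_max
    · have h : δ + β * V k E α β δ (n+1) (b₁-1) - (δ + β * V k E α β δ (n+1) (b₂-1))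
          = β * (V k E α β δ (n+1) (b₁-1) - V k E α β δ (n+1) (b₂-1)) := by ring
      rw [h, abs_mul, abs_of_nonneg hβ0]
      nlinarith [abs_nonneg (V k E α β δ (n+1) (b₁-1) - V k E α β δ (n+1) (b₂-1))]
    · have h : (if 1 ≤ b₁ then E else 0) + β * V k E α β δ (n+1) (b₁-k)
          - ((if 1 ≤ b₂ then E else 0) + β * V k E α β δ (n+1) (b₂-k))
          = ((if 1 ≤ b₁ then E else 0) - (if 1 ≤ b₂ then E else 0))
            + β * (V k E α β δ (n+1) (b₁-k) - V k E α β δ (n+1) (b₂-k)) := by ring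
      rw [h]
      have he : |(if 1 ≤ b₁ then E else 0) - (if 1 ≤ b₂ then E else 0)| ≤ E := by
        split_ifs <;> simp [abs_of_nonneg hE, abs_of_nonpos, hE]
      have := abs_add_le ((if 1 ≤ b₁ then E else 0) - (if 1 ≤ b₂ then E else 0))
        (β * (V k E α β δ (n+1) (b₁-k) - V k E α β δ (n+1) (b₂-k)))
      rw [abs_mul, abs_of_nonneg hβ0] at this
      nlinarith [abs_nonneg (V k E α β δ (n+1) (b₁-k) - V k E α β δ (n+1) (b₂-k))]

lemma gbound (k : ℕ) (E α β : ℝ) (hE : 0 ≤ E) (hα : 0 ≤ α) (hβ0 : 0 ≤ β) (hβ1 : β ≤ 1)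
    (τ b : ℕ) (hτ : 1 ≤ τ) (δ : ℝ) :
    |g k E α β δ τ b - δ| ≤ E + 2 * α * (b:ℝ)^2 + (τ:ℝ) * (E + α * (b:ℝ)^2) := by
  have hA : (0:ℝ) ≤ α * (b:ℝ)^2 := by positivity
  have hT : (0:ℝ) ≤ (τ:ℝ) * (E + α * (b:ℝ)^2) := by positivity
  match τ, hτ with
  | 1, _ =>
    match b with
    | 0 => simp only [g, sub_self, abs_zero]; linarith
    | m+1 =>
      simp only [g]
      have f1 := Fnonneg hα m
      have f3 := Fnonneg hα (m+1-k)
      have g1 := Fle hα (show m ≤ m+1 by omega)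
      have g3 := Fle hα (show m+1-k ≤ m+1 from Nat.sub_le _ _)
      have h : δ - F α m - E + F α (m+1-k) - δ = F α (m+1-k) - F α m - E := by ring
      push_cast at g1 g3
      rw [h, abs_le]
      constructor <;> push_cast <;> linarith
  | n+2, _ =>
    have hd := Vdiff k E α β hE hα hβ0 hβ1 b (n+1) (b-1) (b-k)
      (Nat.sub_le _ _) (Nat.sub_le _ _) δ
    simp only [g]
    have h : δ + β * V k E α β δ (n+1) (b-1) - (if 1 ≤ b then E else 0)
        - β * V k E α β δ (n+1) (b-k) - δ
        = β * (V k E α β δ (n+1) (b-1) - V k E α β δ (n+1) (b-k))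
          - (if 1 ≤ b then E else 0) := by ring
    rw [h]
    have he : |(if 1 ≤ b then E else 0)| ≤ E := by split_ifs <;> simp [abs_of_nonneg hE, hE]
    have habs := abs_sub (β * (V k E α β δ (n+1) (b-1) - V k E α β δ (n+1) (b-k)))
      (if 1 ≤ b then E else 0)
    rw [abs_mul, abs_of_nonneg hβ0] at habs
    push_cast at hd ⊢
    nlinarith [abs_nonneg (V k E α β δ (n+1) (b-1) - V k E α β δ (n+1) (b-k))]

lemma glip (k : ℕ) (E α β : ℝ) (hβ0 : 0 ≤ β) (hβ1 : β ≤ 1)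
    (τ b : ℕ) (δ δ' : ℝ) :
    |g k E α β δ τ b - g k E α β δ' τ b| ≤ (1 + 2 * (τ:ℝ)) * |δ - δ'| := by
  have h0 : (0:ℝ) ≤ |δ - δ'| := abs_nonneg _
  have hτ0 : (0:ℝ) ≤ (τ:ℝ) := Nat.cast_nonneg τ
  match τ with
  | 0 => simp only [g, sub_self, abs_zero]; positivity
  | 1 =>
    match b with
    | 0 => simp only [g]; nlinarith
    | m+1 =>
      simp only [g]
      have h : δ - F α m - E + F α (m+1-k) - (δ' - F α m - E + F α (m+1-k)) = δ - δ' := by ring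
      rw [h]; nlinarith
  | n+2 =>
    have h1 := Vlip k E α β hβ0 hβ1 (n+1) (b-1) δ δ'
    have h2 := Vlip k E α β hβ0 hβ1 (n+1) (b-k) δ δ'
    simp only [g]
    have h : δ + β * V k E α β δ (n+1) (b-1) - (if 1 ≤ b then E else 0)
        - β * V k E α β δ (n+1) (b-k)
        - (δ' + β * V k E α β δ' (n+1) (b-1) - (if 1 ≤ b then E else 0)
          - β * V k E α β δ' (n+1) (b-k))
        = (δ - δ') + β * (V k E α β δ (n+1) (b-1) - V k E α β δ' (n+1) (b-1))
          - β * (V k E α β δ (n+1) (b-k) - V k E α β δ' (n+1) (b-k)) := by ring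
    rw [h]
    have ha := abs_sub ((δ - δ') + β * (V k E α β δ (n+1) (b-1) - V k E α β δ' (n+1) (b-1)))
      (β * (V k E α β δ (n+1) (b-k) - V k E α β δ' (n+1) (b-k)))
    have hb := abs_add_le (δ - δ') (β * (V k E α β δ (n+1) (b-1) - V k E α β δ' (n+1) (b-1)))
    rw [abs_mul, abs_of_nonneg hβ0] at ha hb
    push_cast at h1 h2 ⊢
    nlinarith [abs_nonneg (V k E α β δ (n+1) (b-1) - V k E α β δ' (n+1) (b-1)),
      abs_nonneg (V k E α β δ (n+1) (b-k) - V k E α β δ' (n+1) (b-k))]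

theorem indifference_at_whittle (k : ℕ) (hk : 1 ≤ k) (E α β : ℝ) (hE : 0 ≤ E) (hα : 0 < α)
    (hβ0 : 0 < β) (hβ1 : β < 1)
    (τ b : ℕ) (hτ : 1 ≤ τ) :
    g k E α β (whittle k E α β τ b) τ b = 0 := by
  have hβ0' : (0:ℝ) ≤ β := le_of_lt hβ0
  have hβ1' : β ≤ 1 := le_of_lt hβ1
  have hα' : (0:ℝ) ≤ α := le_of_lt hα
  have hgb : ∀ δ : ℝ, |g k E α β δ τ b - δ|
      ≤ E + 2 * α * (b:ℝ)^2 + (τ:ℝ) * (E + α * (b:ℝ)^2) :=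
    fun δ => gbound k E α β hE hα' hβ0' hβ1' τ b hτ δ
  obtain ⟨K, hK, hgb⟩ : ∃ K : ℝ, 0 ≤ K ∧ ∀ δ : ℝ, |g k E α β δ τ b - δ| ≤ K :=
    ⟨_, by positivity, hgb⟩
  obtain ⟨L, hL, hgl⟩ : ∃ L : ℝ, 0 < L ∧
      ∀ δ δ' : ℝ, |g k E α β δ τ b - g k E α β δ' τ b| ≤ L * |δ - δ'| :=
    ⟨1 + 2 * (τ:ℝ), by positivity, fun δ δ' => glip k E α β hβ0' hβ1' τ b δ δ'⟩
  have hne : Set.Nonempty {δ : ℝ | 0 ≤ g k E α β δ τ b} := ⟨K, by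
    have h := abs_le.mp (hgb K)
    simp only [Set.mem_setOf_eq]
    linarith [h.1]⟩
  have hbdd : BddBelow {δ : ℝ | 0 ≤ g k E α β δ τ b} := ⟨-K, fun δ hδ => by
    have h := abs_le.mp (hgb δ)
    simp only [Set.mem_setOf_eq] at hδ
    linarith [h.2]⟩
  have hωeq : whittle k E α β τ b = sInf {δ : ℝ | 0 ≤ g k E α β δ τ b} := rfl
  generalize hωdef : whittle k E α β τ b = ω at *
  by_contra hne0
  rcases lt_or_gt_of_ne hne0 with hneg | hpos
  · -- g ω < 0
    obtain ⟨ε, hε0, hεc⟩ : ∃ ε : ℝ, 0 < ε ∧ L * ε ≤ -(g k E α β ω τ b) / 2 :=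
      ⟨-(g k E α β ω τ b) / (2*L), div_pos (by linarith) (by positivity), le_of_eq (by field_simp)⟩
    obtain ⟨δ, hδS, hδlt⟩ := exists_lt_of_csInf_lt hne
      (show sInf {δ : ℝ | 0 ≤ g k E α β δ τ b} < ω + ε by rw [← hωeq]; linarith)
    have hωle : ω ≤ δ := by rw [hωeq]; exact csInf_le hbdd hδS
    have habs : |δ - ω| ≤ ε := by rw [abs_of_nonneg (by linarith)]; linarith
    have h1 := (abs_le.mp (hgl δ ω)).2
    have h2 : L * |δ - ω| ≤ L * ε := mul_le_mul_of_nonneg_left habs (le_of_lt hL)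
    have hδmem : (0:ℝ) ≤ g k E α β δ τ b := hδS
    linarith
  · -- g ω > 0
    obtain ⟨ε, hε0, hεc⟩ : ∃ ε : ℝ, 0 < ε ∧ L * ε ≤ (g k E α β ω τ b) / 2 :=
      ⟨(g k E α β ω τ b) / (2*L), div_pos (by linarith) (by positivity), le_of_eq (by field_simp)⟩
    have habs : |ω - ε - ω| ≤ ε := by
      have h : ω - ε - ω = -ε := by ring
      rw [h, abs_neg, abs_of_nonneg (le_of_lt hε0)]
    have h1 := (abs_le.mp (hgl (ω - ε) ω)).1
    have h2 : L * |ω - ε - ω| ≤ L * ε := mul_le_mul_of_nonneg_left habs (le_of_lt hL)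
    have hδS : (ω - ε) ∈ {δ : ℝ | 0 ≤ g k E α β δ τ b} := by
      simp only [Set.mem_setOf_eq]; linarith
    have h4 : sInf {δ : ℝ | 0 ≤ g k E α β δ τ b} ≤ ω - ε := csInf_le hbdd hδS
    rw [← hωeq] at h4
    linarith
end

section
/- Value at the critical subsidy δ = E: for every integer τ ≥ 1 and every integer b with 0 ≤ b ≤ k·τ (the task is finishable by offloading in every remaining slot), the value function under subsidy E equals V_E(τ,b) = E·∑_{i=0}^{τ−1} β^i = E·(1 − β^τ)/(1 − β); in particular, at subsidy E the value is the same for all finishable workloads b ≤ k·τ. -/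
lemma V_le (k : ℕ) (E α β : ℝ) (hE : 0 ≤ E) (hα : 0 < α) (hβ0 : 0 < β) :
    ∀ τ b, V k E α β E τ b ≤ E * ∑ i ∈ Finset.range τ, β ^ i := by
  intro τ
  induction τ with
  | zero => intro b; simp [V]
  | succ n ih =>
    intro b
    match n, b with
    | 0, 0 => simp [V, hE]
    | 0, b + 1 =>
        have h1 : 0 ≤ α * (b:ℝ)^2 := by positivity
        have h2 : 0 ≤ α * ((b+1-k:ℕ):ℝ)^2 := by positivity
        show max (E - F α b) (E - F α (b+1-k)) ≤ _
        norm_num [Finset.sum_range_one, F]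
        constructor <;> nlinarith
    | t + 1, b =>
        have key : ∀ c, β * V k E α β E (t+1) c
            ≤ β * (E * ∑ i ∈ Finset.range (t+1), β ^ i) :=
          fun c => mul_le_mul_of_nonneg_left (ih c) hβ0.le
        have hsum : E * ∑ i ∈ Finset.range (t+2), β ^ i
            = E + β * (E * ∑ i ∈ Finset.range (t+1), β ^ i) := by
          rw [geom_sum_succ]; ring
        show max _ _ ≤ _
        rw [hsum]
        apply max_le
        · have := key (b - 1); linarith
        · have := key (b - k)
          have hif : (if 1 ≤ b then E else 0) ≤ E := by split <;> simp [hE]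
          linarith

lemma V_eq (k : ℕ) (hk : 1 ≤ k) (E α β : ℝ) (hE : 0 ≤ E) (hα : 0 < α) (hβ0 : 0 < β) :
    ∀ τ, 1 ≤ τ → ∀ b, b ≤ k * τ →
      V k E α β E τ b = E * ∑ i ∈ Finset.range τ, β ^ i := by
  intro τ
  induction τ with
  | zero => omega
  | succ n ih =>
    intro _ b hb
    match n, b with
    | 0, 0 =>
        show max E 0 = _
        norm_num [Finset.sum_range_one, max_eq_left hE]
    | 0, b + 1 =>
        have hbk : b + 1 ≤ k := by simpa using hb
        have hb0 : b + 1 - k = 0 := by omega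
        have h1 : 0 ≤ α * (b:ℝ)^2 := by positivity
        show max (E - F α b) (E - F α (b+1-k)) = _
        rw [hb0]
        norm_num [Finset.sum_range_one, F]
        positivity
    | t + 1, b =>
        have hbk : b - k ≤ k * (t+1) := by
          have h1 : b - k ≤ k * (t+1+1) - k := Nat.sub_le_sub_right hb k
          have h2 : k * (t+1+1) - k = k * (t+1) := by
            rw [Nat.mul_succ, Nat.add_sub_cancel]
          rwa [h2] at h1
        have hS : V k E α β E (t+1) (b - k) = E * ∑ i ∈ Finset.range (t+1), β ^ i :=
          ih (by omega) (b - k) hbk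
        have hsum : E * ∑ i ∈ Finset.range (t+2), β ^ i
            = E + β * (E * ∑ i ∈ Finset.range (t+1), β ^ i) := by
          rw [geom_sum_succ]; ring
        show max _ _ = _
        rw [hsum]
        rcases Nat.eq_zero_or_pos b with hb0 | hb1
        · subst hb0
          have h0 : V k E α β E (t+1) 0 = E * ∑ i ∈ Finset.range (t+1), β ^ i :=
            ih (by omega) 0 (Nat.zero_le _)
          simp only [Nat.zero_sub, h0, show ¬ ((1:ℕ) ≤ 0) by omega, if_false, zero_add]
          exact max_eq_left (le_add_of_nonneg_left hE)
        · have hb1' : 1 ≤ b := hb1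
          have hle := V_le k E α β hE hα hβ0 (t+1) (b - 1)
          have hβle := mul_le_mul_of_nonneg_left hle hβ0.le
          rw [if_pos hb1', hS, max_eq_right (by linarith)]

theorem value_at_critical_subsidy (k : ℕ) (hk : 1 ≤ k) (E α β : ℝ) (hE : 0 ≤ E) (hα : 0 < α)
    (hβ0 : 0 < β) (hβ1 : β < 1)
    (τ b : ℕ) (hτ : 1 ≤ τ) (hb : b ≤ k * τ) :
    V k E α β E τ b = E * ∑ i ∈ Finset.range τ, β ^ i ∧
    E * ∑ i ∈ Finset.range τ, β ^ i = E * (1 - β ^ τ) / (1 - β) := by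
  refine ⟨V_eq k hk E α β hE hα hβ0 τ hτ b hb, ?_⟩
  have h2 : (1:ℝ) - β ≠ 0 := by intro h; linarith
  have h3 : β - 1 ≠ 0 := by intro h; linarith
  rw [geom_sum_eq (by linarith : β ≠ 1), mul_div_assoc]
  congr 1
  rw [div_eq_div_iff h3 h2]
  ring
end

section
/- Piecewise formula for h_δ(1,0) (Appendix A): assume k ≥ 2. For every real subsidy δ, the difference h_δ(1,0) := V_δ(1,k−1) − V_δ(1,0) equals E if δ < 0; equals E − δ if 0 ≤ δ < E + α·(k−2)²; and equals −α·(k−2)² if δ ≥ E + α·(k−2)². -/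
theorem h_one_zero_piecewise (k : ℕ) (hk : 2 ≤ k) (E α β : ℝ) (hE : 0 ≤ E) (hα : 0 < α)
    (hβ0 : 0 < β) (hβ1 : β < 1) (δ : ℝ) :
    (δ < 0 → V k E α β δ 1 (k - 1) - V k E α β δ 1 0 = E) ∧
    (0 ≤ δ → δ < E + α * ((k : ℝ) - 2) ^ 2 →
      V k E α β δ 1 (k - 1) - V k E α β δ 1 0 = E - δ) ∧
    (E + α * ((k : ℝ) - 2) ^ 2 ≤ δ →
      V k E α β δ 1 (k - 1) - V k E α β δ 1 0 = -(α * ((k : ℝ) - 2) ^ 2)) := by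

  have hk1 : k - 1 = (k - 2) + 1 := by omega
  have hk0 : (k - 2) + 1 - k = 0 := by omega
  have hcast : ((k - 2 : ℕ) : ℝ) = (k : ℝ) - 2 := by
    push_cast [Nat.cast_sub hk]; ring
  have hV1 : V k E α β δ 1 (k - 1) = max (δ - α * ((k : ℝ) - 2) ^ 2) E := by
    rw [hk1]
    show max (δ - F α (k - 2)) (E - F α ((k - 2) + 1 - k)) = _
    rw [hk0]
    simp [F, hcast]
  have hV0 : V k E α β δ 1 0 = max δ 0 := rfl
  have hsq : 0 ≤ α * ((k : ℝ) - 2) ^ 2 := by positivity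
  refine ⟨fun h => ?_, fun h1 h2 => ?_, fun h => ?_⟩
  · rw [hV1, hV0, max_eq_right (by linarith), max_eq_right (le_of_lt h)]
    ring
  · rw [hV1, hV0, max_eq_right (by linarith), max_eq_left h1]
  · rw [hV1, hV0, max_eq_left (by linarith), max_eq_left (by linarith)]
    ring
end
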